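/- arXiv:2007.05108 — 5 statements merged into one kernel-verified Lean document; each statement's English description precedes it below -/
import Mathlib

section
/- For every prime power q and integers n ≥ c ≥ 1, the number of pairs (𝒜, (U_1, …, U_c)), where 𝒜 is an alternating matrix space in Λ(n,q) and (U_1, …, U_c) is an ordered tuple of nonzero subspaces with F_qⁿ = U_1 ⊕ ⋯ ⊕ U_c such that u_iᵀAu_j = 0 for all i ≠ j, u_i ∈ U_i, u_j ∈ U_j, and A ∈ 𝒜, equals Σ_{(n_1,…,n_c)} (q^{C(n,2)}·[n]_q!)/((q^{C(n_1,2)}·[n_1]_q!)⋯(q^{C(n_c,2)}·[n_c]_q!)) · G_q(Σ_{i∈[c]} C(n_i,2)), where the sum is over all ordered c-partitions (n_1,…,n_c) of n into positive integers. -/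
open Matrix BigOperators

/-- The space of n×n alternating matrices over a field `F`. -/
def altSpace (n : ℕ) (F : Type) [Field F] : Submodule F (Matrix (Fin n) (Fin n) F) where
  carrier := {A | ∀ v : Fin n → F, v ⬝ᵥ A *ᵥ v = 0}
  add_mem' := by
    intro A B hA hB v
    simp only [Set.mem_setOf_eq] at *
    rw [Matrix.add_mulVec, dotProduct_add, hA v, hB v, add_zero]
  zero_mem' := by intro v; simp
  smul_mem' := by
    intro c A hA v
    simp only [Set.mem_setOf_eq] at *
    rw [smul_mulVec, dotProduct_smul, hA v, smul_zero]

/-- The q-integer `[n]_q = q^{n-1} + ⋯ + q + 1`. -/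
def qInt (q n : ℕ) : ℕ := ∑ i ∈ Finset.range n, q ^ i

/-- The q-factorial `[n]_q!`. -/
def qFact (q : ℕ) : ℕ → ℕ
  | 0 => 1
  | n + 1 => qInt q (n + 1) * qFact q n

/-- The Gaussian binomial coefficient `[n choose k]_q`, as a rational number. -/
def qBinom (q n k : ℕ) : ℚ := (qFact q n : ℚ) / ((qFact q k : ℚ) * (qFact q (n - k) : ℚ))

/-- The Galois number `G_q(m) = Σ_{d=0}^m [m choose d]_q`. -/
def galois (q m : ℕ) : ℚ := ∑ d ∈ Finset.range (m + 1), qBinom q m d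

/-- Ordered c-partitions of n into positive integers. -/
def partitions (c n : ℕ) : Finset (Fin c → ℕ) :=
  (Finset.Nat.antidiagonalTuple c n).filter fun ν => ∀ i, 0 < ν i

section numeric
variable {q : ℕ}

lemma qInt_pos (hq : 1 ≤ q) {k : ℕ} (hk : 1 ≤ k) : 0 < qInt q k := by
  unfold qInt
  refine Finset.sum_pos' (fun i _ => Nat.zero_le _) ⟨0, by simp [Finset.mem_range]; omega, by simp⟩

lemma qFact_pos (hq : 1 ≤ q) : ∀ k, 0 < qFact q k
  | 0 => Nat.one_pos
  | k + 1 => Nat.mul_pos (qInt_pos hq (by omega)) (qFact_pos hq k)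

lemma qInt_cast_mul (k : ℕ) : ((qInt q k : ℚ)) * ((q : ℚ) - 1) = (q : ℚ) ^ k - 1 := by
  have := geom_sum_mul (q : ℚ) k
  rw [← this]; congr 1; unfold qInt; push_cast; ring

lemma key_prod (hq : 1 ≤ q) : ∀ d m, d ≤ m →
    (∏ i : Fin d, ((q:ℚ)^m - (q:ℚ)^(i:ℕ))) * (qFact q (m-d) : ℚ) =
      (q:ℚ)^(d.choose 2) * ((q:ℚ)-1)^d * (qFact q m : ℚ) := by
  intro d
  induction d with
  | zero => intro m _; simp
  | succ d ih =>
    intro m hm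
    have hdm : d ≤ m := by omega
    have h1 : m - d = (m - (d+1)) + 1 := by omega
    have h2 : (qFact q (m - d) : ℚ) = (qInt q (m - d) : ℚ) * (qFact q (m - (d+1)) : ℚ) := by
      rw [h1]; push_cast [qFact]; rw [← h1]
    have h3 : ((q:ℚ)^m - (q:ℚ)^d) = (q:ℚ)^d * ((qInt q (m - d) : ℚ) * ((q:ℚ) - 1)) := by
      rw [qInt_cast_mul]
      rw [show ((q:ℚ)^(m-d) - 1) = ((q:ℚ)^(m-d) - 1) from rfl]
      have : (q:ℚ)^d * (q:ℚ)^(m-d) = (q:ℚ)^m := by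
        rw [← pow_add]; congr 1; omega
      rw [mul_sub, this, mul_one]
    have h4 : (d+1).choose 2 = d.choose 2 + d := by
      rw [show (d+1).choose 2 = d.choose 1 + d.choose 2 from Nat.choose_succ_succ d 1,
        Nat.choose_one_right]; omega
    calc (∏ i : Fin (d+1), ((q:ℚ)^m - (q:ℚ)^(i:ℕ))) * (qFact q (m-(d+1)) : ℚ)
        = ((∏ i : Fin d, ((q:ℚ)^m - (q:ℚ)^(i:ℕ))) * ((q:ℚ)^m - (q:ℚ)^d)) *
            (qFact q (m-(d+1)) : ℚ) := by
          rw [Fin.prod_univ_castSucc]; norm_num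
      _ = (∏ i : Fin d, ((q:ℚ)^m - (q:ℚ)^(i:ℕ))) * (qFact q (m-d) : ℚ) *
            ((q:ℚ)^d * ((q:ℚ) - 1)) := by rw [h2, h3]; ring
      _ = (q:ℚ)^(d.choose 2) * ((q:ℚ)-1)^d * (qFact q m : ℚ) * ((q:ℚ)^d * ((q:ℚ) - 1)) := by
          rw [ih m hdm]
      _ = (q:ℚ)^((d+1).choose 2) * ((q:ℚ)-1)^(d+1) * (qFact q m : ℚ) := by
          rw [h4, pow_add, pow_succ]; ring

end numeric

section counting

variable {F : Type} [Field F] [Fintype F]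
variable {V : Type} [AddCommGroup V] [Module F V] [Module.Finite F V]

/-- Fiberwise counting with constant fibers. -/
lemma fintype_card_fiberwise {α β : Type*} [Fintype α] [Fintype β] (f : α → β) (N : ℕ)
    (h : ∀ b : β, Nat.card {a : α // f a = b} = N) :
    Fintype.card α = Fintype.card β * N := by
  classical
  calc Fintype.card α = ∑ b : β, (Finset.univ.filter fun a => f a = b).card := by
        rw [← Finset.card_univ, Finset.card_eq_sum_card_fiberwise (fun a _ => Finset.mem_univ (f a))]
    _ = ∑ _b : β, N := Finset.sum_congr rfl fun b _ => by
        rw [← Fintype.card_subtype, ← Nat.card_eq_fintype_card, h b]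
    _ = Fintype.card β * N := by rw [Finset.sum_const, Finset.card_univ, smul_eq_mul]

/-- The fiber of the span map over a `d`-dimensional subspace `W` is the set of bases of `W`. -/
noncomputable def fiberEquivBases (d : ℕ) (W : Submodule F V) (hW : Module.finrank F W = d) :
    {s : Fin d → V // LinearIndependent F s ∧ Submodule.span F (Set.range s) = W} ≃
    {t : Fin d → W // LinearIndependent F t} where
  toFun s := ⟨fun i => ⟨s.1 i, le_of_eq s.2.2 (Submodule.subset_span (Set.mem_range_self i))⟩, by
    apply LinearIndependent.of_comp W.subtype
    exact s.2.1⟩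
  invFun t := ⟨fun i => (t.1 i : V), by
    constructor
    · exact t.2.map' W.subtype (Submodule.ker_subtype W)
    · have hsp : Submodule.span F (Set.range t.1) = (⊤ : Submodule F W) :=
        Submodule.eq_top_of_finrank_eq
          (by rw [finrank_span_eq_card t.2, Fintype.card_fin, hW])
      have : Set.range (fun i => (t.1 i : V)) = W.subtype '' Set.range t.1 := by
        rw [← Set.range_comp]; rfl
      rw [this, Submodule.span_image, hsp, Submodule.map_subtype_top]⟩
  left_inv s := Subtype.ext rfl
  right_inv t := Subtype.ext (funext fun i => Subtype.ext rfl)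

lemma card_subspaces_dim_mul (d : ℕ) (hd : d ≤ Module.finrank F V) :
    Nat.card {W : Submodule F V // Module.finrank F W = d} *
      (∏ i : Fin d, (Fintype.card F ^ d - Fintype.card F ^ (i : ℕ))) =
      ∏ i : Fin d, (Fintype.card F ^ Module.finrank F V - Fintype.card F ^ (i : ℕ)) := by
  classical
  have : Finite V := Module.finite_of_finite F
  have : Fintype V := Fintype.ofFinite V
  have : Fintype {s : Fin d → V // LinearIndependent F s} := Fintype.ofFinite _
  have : Fintype {W : Submodule F V // Module.finrank F W = d} := Fintype.ofFinite _
  have key := fintype_card_fiberwise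
    (f := fun s : {s : Fin d → V // LinearIndependent F s} =>
      (⟨Submodule.span F (Set.range s.1), by
        rw [finrank_span_eq_card s.2, Fintype.card_fin]⟩ :
        {W : Submodule F V // Module.finrank F W = d}))
    (N := ∏ i : Fin d, (Fintype.card F ^ d - Fintype.card F ^ (i : ℕ))) ?_
  · rw [← Nat.card_eq_fintype_card, ← Nat.card_eq_fintype_card,
      card_linearIndependent hd] at key
    omega
  · intro W
    have e1 : {a : {s : Fin d → V // LinearIndependent F s} //
        (⟨Submodule.span F (Set.range a.1), by
          rw [finrank_span_eq_card a.2, Fintype.card_fin]⟩ :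
          {W : Submodule F V // Module.finrank F W = d}) = W} ≃
        {s : Fin d → V // LinearIndependent F s ∧ Submodule.span F (Set.range s) = W.1} :=
      { toFun := fun a => ⟨a.1.1, a.1.2, congrArg Subtype.val a.2⟩
        invFun := fun s => ⟨⟨s.1, s.2.1⟩, Subtype.ext s.2.2⟩
        left_inv := fun a => Subtype.ext rfl
        right_inv := fun s => Subtype.ext rfl }
    rw [Nat.card_congr e1, Nat.card_congr (fiberEquivBases d W.1 W.2),
      card_linearIndependent (by rw [W.2])]
    rw [W.2]

end counting

section numeric2
variable {q : ℕ}

lemma qFact_cast_ne (hq : 1 ≤ q) (k : ℕ) : (qFact q k : ℚ) ≠ 0 :=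
  Nat.cast_ne_zero.2 (qFact_pos hq k).ne'

lemma cast_prod_sub (hq : 1 ≤ q) {d m : ℕ} (hdm : d ≤ m) :
    ((∏ i : Fin d, (q ^ m - q ^ (i : ℕ)) : ℕ) : ℚ) =
      ∏ i : Fin d, ((q:ℚ) ^ m - (q:ℚ) ^ (i : ℕ)) := by
  rw [Nat.cast_prod]
  refine Finset.prod_congr rfl fun i _ => ?_
  rw [Nat.cast_sub (Nat.pow_le_pow_right hq (le_of_lt (lt_of_lt_of_le i.2 hdm)))]
  push_cast; ring

lemma count_eq_qBinom (hq : 2 ≤ q) {d m Nc : ℕ} (hdm : d ≤ m)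
    (h : Nc * (∏ i : Fin d, (q ^ d - q ^ (i : ℕ))) = ∏ i : Fin d, (q ^ m - q ^ (i : ℕ))) :
    (Nc : ℚ) = qBinom q m d := by
  have hq1 : 1 ≤ q := by omega
  set X : ℚ := (q:ℚ)^(d.choose 2) * ((q:ℚ)-1)^d with hX
  have hXne : X ≠ 0 := by
    apply mul_ne_zero
    · exact pow_ne_zero _ (by exact_mod_cast (by omega : q ≠ 0))
    · exact pow_ne_zero _ (by
        have : (1:ℚ) < (q:ℚ) := by exact_mod_cast hq
        linarith)
  have hPd : (∏ i : Fin d, ((q:ℚ) ^ d - (q:ℚ) ^ (i : ℕ))) = X * (qFact q d : ℚ) := by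
    have := key_prod hq1 d d le_rfl
    simpa [Nat.sub_self, qFact] using this
  have hPm := key_prod hq1 d m hdm
  have hc : (Nc : ℚ) * (∏ i : Fin d, ((q:ℚ) ^ d - (q:ℚ) ^ (i : ℕ)))
      = ∏ i : Fin d, ((q:ℚ) ^ m - (q:ℚ) ^ (i : ℕ)) := by
    rw [← cast_prod_sub hq1 le_rfl, ← cast_prod_sub hq1 hdm]
    exact_mod_cast congrArg (Nat.cast : ℕ → ℚ) h
  rw [qBinom, eq_div_iff (mul_ne_zero (qFact_cast_ne hq1 d) (qFact_cast_ne hq1 (m - d)))]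
  apply mul_left_cancel₀ hXne
  linear_combination (qFact q (m-d) : ℚ) * hc - (Nc : ℚ) * (qFact q (m-d) : ℚ) * hPd + hPm
end numeric2

section counting2
variable {F : Type} [Field F] [Fintype F]
variable {V : Type} [AddCommGroup V] [Module F V] [Module.Finite F V]

lemma card_submodule_eq_galois :
    (Nat.card (Submodule F V) : ℚ) = galois (Fintype.card F) (Module.finrank F V) := by
  classical
  have : Finite V := Module.finite_of_finite F
  have hFin : Finite (Submodule F V) :=
    Finite.of_injective _ (SetLike.coe_injective (A := Submodule F V))
  have : Fintype (Submodule F V) := Fintype.ofFinite _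
  set m := Module.finrank F V
  have hq : 2 ≤ Fintype.card F := Fintype.one_lt_card
  have step1 : Fintype.card (Submodule F V) =
      ∑ d ∈ Finset.range (m + 1), (Finset.univ.filter
        fun W : Submodule F V => Module.finrank F W = d).card := by
    rw [← Finset.card_univ]
    exact Finset.card_eq_sum_card_fiberwise fun W _ =>
      Finset.mem_range.2 (Nat.lt_succ_of_le W.finrank_le)
  rw [Nat.card_eq_fintype_card, step1, galois]
  push_cast
  refine Finset.sum_congr rfl fun d hd => ?_
  have hdm : d ≤ m := Nat.lt_succ_iff.1 (Finset.mem_range.1 hd)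
  rw [show (Finset.univ.filter fun W : Submodule F V => Module.finrank F W = d).card
    = Nat.card {W : Submodule F V // Module.finrank F W = d} by
      rw [Nat.card_eq_fintype_card, Fintype.card_subtype]]
  exact count_eq_qBinom hq hdm (card_subspaces_dim_mul d hdm)

end counting2

section decomps
variable {F : Type} [Field F] [Fintype F]
variable {V : Type} [AddCommGroup V] [Module F V] [Module.Finite F V]
variable {c : ℕ}

lemma block_indep {ν : Fin c → ℕ} {s : (Σ i : Fin c, Fin (ν i)) → V}
    (hs : LinearIndependent F s) (i : Fin c) :
    LinearIndependent F (fun k : Fin (ν i) => s ⟨i, k⟩) :=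
  hs.comp (Sigma.mk i) sigma_mk_injective

lemma range_block {ν : Fin c → ℕ} (s : (Σ i : Fin c, Fin (ν i)) → V) (i : Fin c) :
    (Set.range fun k : Fin (ν i) => s ⟨i, k⟩) = s '' (Sigma.fst ⁻¹' {i}) := by
  ext x; constructor
  · rintro ⟨k, rfl⟩; exact ⟨⟨i, k⟩, rfl, rfl⟩
  · rintro ⟨⟨j, k⟩, hj, rfl⟩
    obtain rfl : j = i := hj
    exact ⟨k, rfl⟩

lemma spanBlocks_internal {ν : Fin c → ℕ} {s : (Σ i : Fin c, Fin (ν i)) → V}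
    (hs : LinearIndependent F s) (hcard : ∑ i, ν i = Module.finrank F V) :
    DirectSum.IsInternal (fun i => Submodule.span F (Set.range fun k : Fin (ν i) => s ⟨i, k⟩)) := by
  rw [DirectSum.isInternal_submodule_iff_iSupIndep_and_iSup_eq_top]
  constructor
  · rw [iSupIndep_def]
    intro i
    refine Disjoint.mono (le_of_eq (by rw [range_block]))
      (iSup₂_le fun j hj => ?_) (hs.disjoint_span_image (s := Sigma.fst ⁻¹' {i})
        (t := (Sigma.fst ⁻¹' {i})ᶜ) disjoint_compl_right)
    rw [range_block]
    refine Submodule.span_mono (Set.image_mono ?_)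
    intro a ha
    simp only [Set.mem_preimage, Set.mem_singleton_iff] at ha
    simp [Set.mem_compl_iff, ha, hj]
  · rw [← Submodule.span_iUnion]
    have : (⋃ i, Set.range fun k : Fin (ν i) => s ⟨i, k⟩) = Set.range s :=
      (Set.range_sigma_eq_iUnion_range s).symm
    rw [this]
    apply Submodule.eq_top_of_finrank_eq
    rw [finrank_span_eq_card hs, Fintype.card_sigma]
    simpa using hcard

/-- The fiber of the block-span map over a decomposition `U`. -/
noncomputable def fiberEquivDecomp {ν : Fin c → ℕ} (U : Fin c → Submodule F V)
    (hU : DirectSum.IsInternal U) (hrk : ∀ i, Module.finrank F (U i) = ν i) :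
    {s : (Σ i : Fin c, Fin (ν i)) → V // LinearIndependent F s ∧
      ∀ i, Submodule.span F (Set.range fun k : Fin (ν i) => s ⟨i, k⟩) = U i} ≃
    (∀ i, {t : Fin (ν i) → U i // LinearIndependent F t}) where
  toFun s i := ⟨fun k => ⟨s.1 ⟨i, k⟩, le_of_eq (s.2.2 i)
      (Submodule.subset_span (Set.mem_range_self k))⟩,
    LinearIndependent.of_comp (U i).subtype (block_indep s.2.1 i)⟩
  invFun t := ⟨fun a => ((t a.1).1 a.2 : V), by
    classical
    have hb : ∀ i, Submodule.span F (Set.range (t i).1) = (⊤ : Submodule F (U i)) := fun i =>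
      Submodule.eq_top_of_finrank_eq
        (by rw [finrank_span_eq_card (t i).2, Fintype.card_fin, hrk i])
    let b : ∀ i, Module.Basis (Fin (ν i)) F (U i) := fun i => Module.Basis.mk (t i).2 (le_of_eq (hb i).symm)
    constructor
    · have hB := (hU.collectedBasis b).linearIndependent
      have hcoe : ⇑(hU.collectedBasis b) = fun a : Σ i, Fin (ν i) => ((t a.1).1 a.2 : V) := by
        rw [hU.collectedBasis_coe b]
        funext a
        simp only [b, Module.Basis.coe_mk]
      rwa [hcoe] at hB
    · intro i
      have : (Set.range fun k : Fin (ν i) => ((t i).1 k : V)) =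
          (U i).subtype '' Set.range (t i).1 := by rw [← Set.range_comp]; rfl
      rw [this, Submodule.span_image, hb i, Submodule.map_subtype_top]⟩
  left_inv s := Subtype.ext (by funext a; cases a; rfl)
  right_inv t := by funext i; exact Subtype.ext (funext fun k => Subtype.ext rfl)

/-- The block-span map from independent families to decompositions. -/
noncomputable def spanMap (ν : Fin c → ℕ) (hcard : ∑ i, ν i = Module.finrank F V)
    (s : {s : (Σ i : Fin c, Fin (ν i)) → V // LinearIndependent F s}) :
    {U : Fin c → Submodule F V // DirectSum.IsInternal U ∧
      ∀ i, Module.finrank F (U i) = ν i} :=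
  ⟨fun i => Submodule.span F (Set.range fun k : Fin (ν i) => s.1 ⟨i, k⟩),
    spanBlocks_internal s.2 hcard, fun i => by
      rw [finrank_span_eq_card (block_indep s.2 i), Fintype.card_fin]⟩

lemma card_decompositions (ν : Fin c → ℕ) (hcard : ∑ i, ν i = Module.finrank F V) :
    Nat.card {U : Fin c → Submodule F V // DirectSum.IsInternal U ∧
        ∀ i, Module.finrank F (U i) = ν i} *
      ∏ i, ∏ k : Fin (ν i), (Fintype.card F ^ (ν i) - Fintype.card F ^ (k : ℕ)) =
    ∏ i : Fin (Module.finrank F V),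
      (Fintype.card F ^ Module.finrank F V - Fintype.card F ^ (i : ℕ)) := by
  classical
  have : Finite V := Module.finite_of_finite F
  have : Fintype V := Fintype.ofFinite V
  set m := Module.finrank F V
  set σ := (Σ i : Fin c, Fin (ν i))
  have hσ : Fintype.card σ = m := by rw [Fintype.card_sigma]; simpa using hcard
  have : Fintype {s : σ → V // LinearIndependent F s} := Fintype.ofFinite _
  have : Fintype {U : Fin c → Submodule F V // DirectSum.IsInternal U ∧
      ∀ i, Module.finrank F (U i) = ν i} := Fintype.ofFinite _
  -- card of independent sigma-families
  have cardS : Nat.card {s : σ → V // LinearIndependent F s} =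
      ∏ i : Fin m, (Fintype.card F ^ m - Fintype.card F ^ (i : ℕ)) := by
    have e : σ ≃ Fin m := Fintype.equivFinOfCardEq hσ
    have E0 : {s : σ → V // LinearIndependent F s} ≃
        {s : Fin m → V // LinearIndependent F s} :=
      { toFun := fun s => ⟨s.1 ∘ e.symm, (linearIndependent_equiv e.symm).2 s.2⟩
        invFun := fun s => ⟨s.1 ∘ e, (linearIndependent_equiv e).2 s.2⟩
        left_inv := fun s => Subtype.ext (by funext a; simp)
        right_inv := fun s => Subtype.ext (by funext a; simp) }
    rw [Nat.card_congr E0, card_linearIndependent le_rfl]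
  have hfib : ∀ U : {U : Fin c → Submodule F V // DirectSum.IsInternal U ∧
      ∀ i, Module.finrank F (U i) = ν i},
      Nat.card {a : {s : σ → V // LinearIndependent F s} // spanMap ν hcard a = U} =
      ∏ i, ∏ k : Fin (ν i), (Fintype.card F ^ (ν i) - Fintype.card F ^ (k : ℕ)) := by
    intro U
    have e1 : {a : {s : σ → V // LinearIndependent F s} // spanMap ν hcard a = U} ≃
        {s : σ → V // LinearIndependent F s ∧
          ∀ i, Submodule.span F (Set.range fun k : Fin (ν i) => s ⟨i, k⟩) = U.1 i} :=
      { toFun := fun a => ⟨a.1.1, a.1.2, fun i =>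
          congrFun (congrArg Subtype.val a.2) i⟩
        invFun := fun s => ⟨⟨s.1, s.2.1⟩, Subtype.ext (funext s.2.2)⟩
        left_inv := fun a => Subtype.ext rfl
        right_inv := fun s => Subtype.ext rfl }
    rw [Nat.card_congr e1, Nat.card_congr (fiberEquivDecomp U.1 U.2.1 U.2.2), Nat.card_pi]
    refine Finset.prod_congr rfl fun i _ => ?_
    rw [card_linearIndependent (by rw [U.2.2 i]), U.2.2 i]
  have key := fintype_card_fiberwise (f := spanMap ν hcard)
    (N := ∏ i, ∏ k : Fin (ν i), (Fintype.card F ^ (ν i) - Fintype.card F ^ (k : ℕ))) hfib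
  calc Nat.card {U : Fin c → Submodule F V // DirectSum.IsInternal U ∧
        ∀ i, Module.finrank F (U i) = ν i} *
      ∏ i, ∏ k : Fin (ν i), (Fintype.card F ^ (ν i) - Fintype.card F ^ (k : ℕ))
      = Fintype.card {U : Fin c → Submodule F V // DirectSum.IsInternal U ∧
          ∀ i, Module.finrank F (U i) = ν i} *
        ∏ i, ∏ k : Fin (ν i), (Fintype.card F ^ (ν i) - Fintype.card F ^ (k : ℕ)) := by
        rw [Nat.card_eq_fintype_card]
    _ = Fintype.card {s : σ → V // LinearIndependent F s} := key.symm
    _ = Nat.card {s : σ → V // LinearIndependent F s} := Nat.card_eq_fintype_card.symm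
    _ = _ := cardS

lemma isInternal_sum_finrank {U : Fin c → Submodule F V} (hU : DirectSum.IsInternal U) :
    ∑ i, Module.finrank F (U i) = Module.finrank F V := by
  classical
  let b := hU.collectedBasis (fun i => Module.finBasis F (U i))
  rw [Module.finrank_eq_card_basis b, Fintype.card_sigma]
  simp

end decomps

section structural
variable {F : Type} [Field F] {n c : ℕ}

/-- Matrices orthogonalizing a tuple of subspaces. -/
def orthSpace (U : Fin c → Submodule F (Fin n → F)) :
    Submodule F (Matrix (Fin n) (Fin n) F) where
  carrier := {A | ∀ i j, i ≠ j → ∀ u ∈ U i, ∀ u' ∈ U j, u ⬝ᵥ A *ᵥ u' = 0}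
  add_mem' := by
    intro A B hA hB i j hij u hu u' hu'
    rw [Matrix.add_mulVec, dotProduct_add, hA i j hij u hu u' hu',
      hB i j hij u hu u' hu', add_zero]
  zero_mem' := by intro i j hij u hu u' hu'; simp
  smul_mem' := by
    intro t A hA i j hij u hu u' hu'
    rw [Matrix.smul_mulVec, dotProduct_smul, hA i j hij u hu u' hu', smul_zero]

lemma mem_orthSpace {U : Fin c → Submodule F (Fin n → F)} {A : Matrix (Fin n) (Fin n) F} :
    A ∈ orthSpace U ↔ ∀ i j, i ≠ j → ∀ u ∈ U i, ∀ u' ∈ U j, u ⬝ᵥ A *ᵥ u' = 0 := Iff.rfl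

lemma bilin_zero_on_span {M : Type*} [AddCommGroup M] [Module F M]
    (Φ : M →ₗ[F] M →ₗ[F] F) {S S' : Set M} (h : ∀ x ∈ S, ∀ y ∈ S', Φ x y = 0) :
    ∀ u ∈ Submodule.span F S, ∀ u' ∈ Submodule.span F S', Φ u u' = 0 := by
  intro u hu u' hu'
  have h1 : ∀ x ∈ S, Φ x u' = 0 := fun x hx =>
    (Submodule.span_le.2 fun y hy => LinearMap.mem_ker.2 (h x hx y hy) :
      Submodule.span F S' ≤ LinearMap.ker (Φ x)) hu'
  have h2 : Submodule.span F S ≤ LinearMap.ker (Φ.flip u') :=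
    Submodule.span_le.2 fun x hx => LinearMap.mem_ker.2 (by
      rw [LinearMap.flip_apply]; exact h1 x hx)
  have := h2 hu
  rwa [LinearMap.mem_ker, LinearMap.flip_apply] at this

lemma alt_pointwise {A : Matrix (Fin n) (Fin n) F} (hA : A ∈ altSpace n F)
    (v w : Fin n → F) : (v ⬝ᵥ A *ᵥ w) + (w ⬝ᵥ A *ᵥ v) = 0 := by
  have h := hA (v + w)
  have hv := hA v
  have hw := hA w
  rw [Matrix.mulVec_add, dotProduct_add, add_dotProduct,
    add_dotProduct] at h
  linear_combination h - hv - hw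

lemma toLinearMap₂'_eq (A : Matrix (Fin n) (Fin n) F) (x y : Fin n → F) :
    Matrix.toLinearMap₂' F A x y = x ⬝ᵥ A *ᵥ y := Matrix.toLinearMap₂'_apply' A x y

lemma bilin_expand {M : Type*} [AddCommGroup M] [Module F M] {ι : Type*} [Fintype ι]
    (Φ : M →ₗ[F] M →ₗ[F] F) (x : ι → M) (cf : ι → F) :
    Φ (∑ a, cf a • x a) (∑ b, cf b • x b) =
      ∑ a, ∑ b, cf a * (cf b * Φ (x a) (x b)) := by
  rw [map_sum Φ (fun a => cf a • x a) Finset.univ, LinearMap.sum_apply]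
  refine Finset.sum_congr rfl fun a _ => ?_
  rw [_root_.map_smul Φ (cf a) (x a), LinearMap.smul_apply,
    map_sum (Φ (x a)) (fun b => cf b • x b) Finset.univ, Finset.smul_sum]
  refine Finset.sum_congr rfl fun b _ => ?_
  rw [_root_.map_smul (Φ (x a)) (cf b) (x b), smul_eq_mul, smul_eq_mul]

lemma alt_of_basis {ι : Type*} [Fintype ι] (B : Module.Basis ι F (Fin n → F))
    {A : Matrix (Fin n) (Fin n) F}
    (h0 : ∀ a, B a ⬝ᵥ A *ᵥ B a = 0)
    (h1 : ∀ a b, (B a ⬝ᵥ A *ᵥ B b) + (B b ⬝ᵥ A *ᵥ B a) = 0) :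
    A ∈ altSpace n F := by
  intro v
  obtain ⟨cf, rfl⟩ : ∃ cf : ι → F, v = ∑ a, cf a • B a := ⟨B.repr v, (B.sum_repr v).symm⟩
  rw [← toLinearMap₂'_eq, bilin_expand]
  rw [← Finset.sum_product' (f := fun a b => cf a * (cf b * Matrix.toLinearMap₂' F A (B a) (B b)))]
  refine Finset.sum_ninvolution Prod.swap (fun p => ?_) (fun p hp => ?_)
    (fun p => Finset.mem_univ _) (fun p => Prod.swap_swap p)
  · have hh := h1 p.1 p.2
    rw [← toLinearMap₂'_eq A (B p.1) (B p.2), ← toLinearMap₂'_eq A (B p.2) (B p.1)] at hh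
    simp only [Prod.fst_swap, Prod.snd_swap]
    linear_combination (cf p.1 * cf p.2) * hh
  · intro h
    apply hp
    have h12 : p.2 = p.1 := congrArg Prod.fst h
    have hh := h0 p.1
    rw [← toLinearMap₂'_eq A (B p.1) (B p.1)] at hh
    rw [h12, hh, mul_zero, mul_zero]

/-- The block-diagonal alternating matrix space for a dimension vector `ν`. -/
def blockAlt (ν : Fin c → ℕ) :
    Submodule F (Matrix (Σ i : Fin c, Fin (ν i)) (Σ i : Fin c, Fin (ν i)) F) where
  carrier := {M | (∀ a, M a a = 0) ∧ (∀ a b, M a b + M b a = 0) ∧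
    ∀ a b, a.1 ≠ b.1 → M a b = 0}
  add_mem' := by
    rintro A B ⟨hA0, hA1, hA2⟩ ⟨hB0, hB1, hB2⟩
    refine ⟨fun a => ?_, fun a b => ?_, fun a b hab => ?_⟩
    · simp only [Matrix.add_apply, hA0 a, hB0 a, add_zero]
    · have := hA1 a b; have := hB1 a b
      simp only [Matrix.add_apply]
      linear_combination hA1 a b + hB1 a b
    · simp only [Matrix.add_apply, hA2 a b hab, hB2 a b hab, add_zero]
  zero_mem' := by
    refine ⟨fun a => rfl, fun a b => by simp, fun a b hab => rfl⟩
  smul_mem' := by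
    rintro t A ⟨hA0, hA1, hA2⟩
    refine ⟨fun a => ?_, fun a b => ?_, fun a b hab => ?_⟩
    · simp only [Matrix.smul_apply, hA0 a, smul_zero]
    · simp only [Matrix.smul_apply, smul_eq_mul]
      linear_combination t * hA1 a b
    · simp only [Matrix.smul_apply, hA2 a b hab, smul_zero]

lemma mem_inf_iff_blockAlt {U : Fin c → Submodule F (Fin n → F)}
    (hU : DirectSum.IsInternal U) {ν : Fin c → ℕ}
    (bs : ∀ i, Module.Basis (Fin (ν i)) F (U i)) (A : Matrix (Fin n) (Fin n) F) :
    A ∈ altSpace n F ⊓ orthSpace U ↔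
      (LinearMap.toMatrix₂ (hU.collectedBasis bs) (hU.collectedBasis bs))
        (Matrix.toLinearMap₂' F A) ∈ blockAlt ν := by
  classical
  set B := hU.collectedBasis bs with hB
  have hent : ∀ a b, (LinearMap.toMatrix₂ B B) (Matrix.toLinearMap₂' F A) a b =
      B a ⬝ᵥ A *ᵥ B b := fun a b => by
    rw [LinearMap.toMatrix₂_apply, toLinearMap₂'_eq]
  constructor
  · rintro ⟨halt, horth⟩
    refine ⟨fun a => ?_, fun a b => ?_, fun a b hab => ?_⟩
    · rw [hent]; exact halt (B a)
    · rw [hent, hent]; exact alt_pointwise halt (B a) (B b)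
    · rw [hent]
      exact horth a.1 b.1 hab (B a) (hU.collectedBasis_mem bs a)
        (B b) (hU.collectedBasis_mem bs b)
  · rintro ⟨h0, h1, h2⟩
    simp only [hent] at h0 h1 h2
    constructor
    · exact alt_of_basis B h0 h1
    · intro i j hij u hu u' hu'
      have hrange : ∀ i : Fin c,
          Submodule.span F (Set.range fun k : Fin (ν i) => B ⟨i, k⟩) = U i := by
        intro i
        have hBk : (fun k : Fin (ν i) => B ⟨i, k⟩) = fun k => ((bs i k : Fin n → F)) := by
          funext k
          rw [hB, hU.collectedBasis_coe]
        rw [hBk]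
        have : (Set.range fun k : Fin (ν i) => ((bs i k : Fin n → F))) =
            (U i).subtype '' Set.range (bs i) := by rw [← Set.range_comp]; rfl
        rw [this, Submodule.span_image, Module.Basis.span_eq, Submodule.map_subtype_top]
      have key := bilin_zero_on_span (Matrix.toLinearMap₂' F A)
        (S := Set.range fun k : Fin (ν i) => B ⟨i, k⟩)
        (S' := Set.range fun k : Fin (ν j) => B ⟨j, k⟩) ?_ u ?_ u' ?_
      · rwa [toLinearMap₂'_eq] at key
      · rintro x ⟨k, rfl⟩ y ⟨l, rfl⟩
        rw [toLinearMap₂'_eq]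
        exact h2 ⟨i, k⟩ ⟨j, l⟩ hij
      · rw [hrange i]; exact hu
      · rw [hrange j]; exact hu'

end structural

section blockcount
variable {F : Type} [Field F] {c : ℕ}

lemma card_lt_pairs (m : ℕ) :
    Fintype.card {p : Fin m × Fin m // p.1 < p.2} = m.choose 2 := by
  have e : {p : Fin m × Fin m // p.1 < p.2} ≃ (Σ l : Fin m, Fin (l : ℕ)) :=
    { toFun := fun p => ⟨p.1.2, ⟨(p.1.1 : ℕ), p.2⟩⟩
      invFun := fun x => ⟨(⟨(x.2 : ℕ), lt_trans x.2.2 x.1.2⟩, x.1), x.2.2⟩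
      left_inv := fun p => Subtype.ext (Prod.ext (Fin.ext rfl) rfl)
      right_inv := fun x => congrArg (Sigma.mk x.1) (Fin.ext rfl) }
  rw [Fintype.card_congr e, Fintype.card_sigma]
  simp only [Fintype.card_fin]
  rw [Fin.sum_univ_eq_sum_range (fun l => l) m]
  have h2 := Finset.sum_range_id_mul_two m
  have h3 : m.choose 2 = m * (m - 1) / 2 := Nat.choose_two_right m
  omega

lemma fin_cast_self {m : ℕ} (pf : m = m) (x : Fin m) : Fin.cast pf x = x := Fin.ext rfl

/-- Auxiliary: the value pattern for an alternating matrix determined by upper entries. -/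
def pairF {ν : Fin c → ℕ}
    (f : (Σ i : Fin c, {p : Fin (ν i) × Fin (ν i) // p.1 < p.2}) → F)
    (i : Fin c) (k l : Fin (ν i)) : F :=
  if hkl : k < l then f ⟨i, ⟨(k, l), hkl⟩⟩
  else if hlk : l < k then - f ⟨i, ⟨(l, k), hlk⟩⟩
  else 0

lemma pairF_diag {ν : Fin c → ℕ}
    (f : (Σ i : Fin c, {p : Fin (ν i) × Fin (ν i) // p.1 < p.2}) → F)
    (i : Fin c) (k : Fin (ν i)) : pairF f i k k = 0 := by
  rw [pairF, dif_neg (lt_irrefl k), dif_neg (lt_irrefl k)]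

lemma pairF_eval {ν : Fin c → ℕ}
    (f : (Σ i : Fin c, {p : Fin (ν i) × Fin (ν i) // p.1 < p.2}) → F)
    (i : Fin c) {k l : Fin (ν i)} (hkl : k < l) :
    pairF f i k l = f ⟨i, ⟨(k, l), hkl⟩⟩ := dif_pos hkl

lemma pairF_eval_gt {ν : Fin c → ℕ}
    (f : (Σ i : Fin c, {p : Fin (ν i) × Fin (ν i) // p.1 < p.2}) → F)
    (i : Fin c) {k l : Fin (ν i)} (hkl : l < k) :
    pairF f i k l = - f ⟨i, ⟨(l, k), hkl⟩⟩ := by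
  rw [pairF, dif_neg (asymm hkl), dif_pos hkl]

lemma pairF_antisym {ν : Fin c → ℕ}
    (f : (Σ i : Fin c, {p : Fin (ν i) × Fin (ν i) // p.1 < p.2}) → F)
    (i : Fin c) (k l : Fin (ν i)) : pairF f i k l + pairF f i l k = 0 := by
  rcases lt_trichotomy k l with h | h | h
  · rw [pairF_eval _ _ h, pairF_eval_gt _ _ h]; ring
  · subst h; rw [pairF_diag]; ring
  · rw [pairF_eval_gt _ _ h, pairF_eval _ _ h]; ring

/-- `blockAlt ν` is equivalent to functions on within-block ordered pairs. -/
noncomputable def blockAltEquiv (ν : Fin c → ℕ) :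
    (blockAlt (F := F) ν) ≃
      ((Σ i : Fin c, {p : Fin (ν i) × Fin (ν i) // p.1 < p.2}) → F) where
  toFun M ω := M.1 ⟨ω.1, ω.2.1.1⟩ ⟨ω.1, ω.2.1.2⟩
  invFun f := ⟨fun a b =>
      if h : a.1 = b.1 then pairF f a.1 a.2 (Fin.cast (congrArg ν h).symm b.2) else 0, by
    refine ⟨fun a => ?_, fun a b => ?_, fun a b hab => ?_⟩
    · dsimp only
      rw [dif_pos rfl, fin_cast_self, pairF_diag]
    · rcases a with ⟨i, k⟩
      rcases b with ⟨j, l⟩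
      by_cases h : i = j
      · subst h
        dsimp only
        rw [dif_pos rfl, dif_pos rfl, fin_cast_self, fin_cast_self]
        exact pairF_antisym f i k l
      · dsimp only
        rw [dif_neg h, dif_neg (Ne.symm h), add_zero]
    · dsimp only
      rw [dif_neg hab]⟩
  left_inv := by
    rintro ⟨M, hM0, hM1, hM2⟩
    apply Subtype.ext
    funext a b
    rcases a with ⟨i, k⟩
    rcases b with ⟨j, l⟩
    by_cases h : i = j
    · subst h
      dsimp only
      rw [dif_pos rfl, fin_cast_self]
      rcases lt_trichotomy k l with hkl | hkl | hkl
      · rw [pairF_eval _ _ hkl]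
      · subst hkl
        rw [pairF_diag]
        exact (hM0 ⟨i, k⟩).symm
      · rw [pairF_eval_gt _ _ hkl]
        have h1 := hM1 ⟨i, k⟩ ⟨i, l⟩
        dsimp only
        linear_combination -h1
    · dsimp only
      rw [dif_neg h]
      exact (hM2 ⟨i, k⟩ ⟨j, l⟩ h).symm
  right_inv := by
    intro f
    funext ω
    rcases ω with ⟨i, ⟨⟨k, l⟩, hkl⟩⟩
    dsimp only
    rw [dif_pos rfl, fin_cast_self, pairF_eval _ _ hkl]

lemma finrank_blockAlt [Fintype F] (ν : Fin c → ℕ) :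
    Module.finrank F (blockAlt (F := F) ν) = ∑ i, (ν i).choose 2 := by
  classical
  have : Fintype (blockAlt (F := F) ν) := Fintype.ofFinite _
  have hcard := Module.card_eq_pow_finrank (K := F) (V := blockAlt (F := F) ν)
  rw [Fintype.card_congr (blockAltEquiv ν), Fintype.card_fun, Fintype.card_sigma] at hcard
  have h2 : ∑ i, Fintype.card {p : Fin (ν i) × Fin (ν i) // p.1 < p.2} =
      ∑ i, (ν i).choose 2 := Finset.sum_congr rfl fun i _ => card_lt_pairs (ν i)
  rw [h2] at hcard
  exact (Nat.pow_right_injective Fintype.one_lt_card hcard).symm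

end blockcount

section final
variable {F : Type} [Field F] [Fintype F] {n c : ℕ}

lemma finrank_inf {U : Fin c → Submodule F (Fin n → F)} (hU : DirectSum.IsInternal U) :
    Module.finrank F ((altSpace n F ⊓ orthSpace U : Submodule F (Matrix (Fin n) (Fin n) F))) =
      ∑ i, (Module.finrank F (U i)).choose 2 := by
  classical
  set ν : Fin c → ℕ := fun i => Module.finrank F (U i) with hν
  let bs : ∀ i, Module.Basis (Fin (ν i)) F (U i) := fun i => Module.finBasis F (U i)
  let B := hU.collectedBasis bs
  let Ψ : Matrix (Fin n) (Fin n) F ≃ₗ[F]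
      Matrix (Σ i : Fin c, Fin (ν i)) (Σ i : Fin c, Fin (ν i)) F :=
    (Matrix.toLinearMap₂' F : Matrix (Fin n) (Fin n) F ≃ₗ[F]
        ((Fin n → F) →ₗ[F] (Fin n → F) →ₗ[F] F)).trans (LinearMap.toMatrix₂ B B)
  have hSU : Submodule.map (Ψ : Matrix (Fin n) (Fin n) F →ₗ[F]
      Matrix (Σ i : Fin c, Fin (ν i)) (Σ i : Fin c, Fin (ν i)) F)
      (altSpace n F ⊓ orthSpace U) = blockAlt ν := by
    ext M
    rw [Submodule.mem_map_equiv]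
    have h1 := mem_inf_iff_blockAlt hU bs (Ψ.symm M)
    have h2 : (LinearMap.toMatrix₂ (hU.collectedBasis bs) (hU.collectedBasis bs))
        (Matrix.toLinearMap₂' F (Ψ.symm M)) = M := Ψ.apply_symm_apply M
    rw [h2] at h1
    exact h1
  have e1 := (Ψ.submoduleMap (altSpace n F ⊓ orthSpace U)).finrank_eq
  rw [hSU] at e1
  rw [e1, finrank_blockAlt]

lemma count_decomp_cast {q : ℕ} (hq : 2 ≤ q) {Nc : ℕ} (ν : Fin c → ℕ)
    (hsum : ∑ i, ν i = n)
    (h : Nc * ∏ i, ∏ k : Fin (ν i), (q ^ (ν i) - q ^ (k : ℕ)) =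
      ∏ i : Fin n, (q ^ n - q ^ (i : ℕ))) :
    (Nc : ℚ) = ((q : ℚ) ^ (n.choose 2) * (qFact q n : ℚ)) /
      ∏ i, ((q : ℚ) ^ ((ν i).choose 2) * (qFact q (ν i) : ℚ)) := by
  have hq1 : 1 ≤ q := by omega
  have hq1' : ((q : ℚ) - 1) ≠ 0 := by
    have : (1 : ℚ) < (q : ℚ) := by exact_mod_cast hq
    linarith
  have hPn : (∏ i : Fin n, ((q:ℚ) ^ n - (q:ℚ) ^ (i : ℕ))) =
      (q:ℚ) ^ (n.choose 2) * ((q:ℚ) - 1) ^ n * (qFact q n : ℚ) := by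
    have := key_prod hq1 n n le_rfl
    simpa [Nat.sub_self, qFact] using this
  have hPν : ∀ i : Fin c, (∏ k : Fin (ν i), ((q:ℚ) ^ (ν i) - (q:ℚ) ^ (k : ℕ))) =
      (q:ℚ) ^ ((ν i).choose 2) * ((q:ℚ) - 1) ^ (ν i) * (qFact q (ν i) : ℚ) := by
    intro i
    have := key_prod hq1 (ν i) (ν i) le_rfl
    simpa [Nat.sub_self, qFact] using this
  have hc : (Nc : ℚ) * ∏ i, ∏ k : Fin (ν i), ((q:ℚ) ^ (ν i) - (q:ℚ) ^ (k : ℕ)) =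
      ∏ i : Fin n, ((q:ℚ) ^ n - (q:ℚ) ^ (i : ℕ)) := by
    rw [← cast_prod_sub hq1 le_rfl, show (∏ i, ∏ k : Fin (ν i), ((q:ℚ) ^ (ν i) - (q:ℚ) ^ (k : ℕ)))
        = ((∏ i, ∏ k : Fin (ν i), (q ^ (ν i) - q ^ (k : ℕ)) : ℕ) : ℚ) by
      rw [Nat.cast_prod]
      exact Finset.prod_congr rfl fun i _ => (cast_prod_sub hq1 le_rfl).symm]
    exact_mod_cast congrArg (Nat.cast : ℕ → ℚ) h
  have hprod : (∏ i, ∏ k : Fin (ν i), ((q:ℚ) ^ (ν i) - (q:ℚ) ^ (k : ℕ))) =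
      (∏ i, ((q:ℚ) ^ ((ν i).choose 2) * (qFact q (ν i) : ℚ))) * ((q:ℚ) - 1) ^ n := by
    calc (∏ i, ∏ k : Fin (ν i), ((q:ℚ) ^ (ν i) - (q:ℚ) ^ (k : ℕ)))
        = ∏ i, (((q:ℚ) ^ ((ν i).choose 2) * (qFact q (ν i) : ℚ)) * ((q:ℚ) - 1) ^ (ν i)) :=
          Finset.prod_congr rfl fun i _ => by rw [hPν i]; ring
      _ = (∏ i, ((q:ℚ) ^ ((ν i).choose 2) * (qFact q (ν i) : ℚ))) *
            ∏ i, ((q:ℚ) - 1) ^ (ν i) := Finset.prod_mul_distrib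
      _ = _ := by rw [Finset.prod_pow_eq_pow_sum, hsum]
  have hne : (∏ i, ((q:ℚ) ^ ((ν i).choose 2) * (qFact q (ν i) : ℚ))) ≠ 0 :=
    Finset.prod_ne_zero_iff.2 fun i _ => mul_ne_zero
      (pow_ne_zero _ (by exact_mod_cast (by omega : q ≠ 0))) (qFact_cast_ne hq1 _)
  rw [eq_div_iff hne]
  apply mul_right_cancel₀ (pow_ne_zero n hq1')
  calc (Nc : ℚ) * (∏ i, ((q:ℚ) ^ ((ν i).choose 2) * (qFact q (ν i) : ℚ))) * ((q:ℚ) - 1) ^ n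
      = (Nc : ℚ) * ∏ i, ∏ k : Fin (ν i), ((q:ℚ) ^ (ν i) - (q:ℚ) ^ (k : ℕ)) := by
        rw [hprod]; ring
    _ = ∏ i : Fin n, ((q:ℚ) ^ n - (q:ℚ) ^ (i : ℕ)) := hc
    _ = (q:ℚ) ^ (n.choose 2) * (qFact q n : ℚ) * ((q:ℚ) - 1) ^ n := by rw [hPn]; ring

end final

/-- The number of pairs `(𝒜, (U_1, …, U_c))` of an alternating matrix space in `Λ(n,q)`
together with an ordered direct sum decomposition of `F_q^n` into nonzero subspaces
pairwise orthogonal with respect to every matrix of `𝒜`. -/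
theorem count_orthogonal_decompositions (q n c : ℕ) (hq : IsPrimePow q)
    (hc : 1 ≤ c) (hn : c ≤ n)
    (F : Type) [Field F] [Fintype F] (hF : Fintype.card F = q) :
    (Nat.card {p : Submodule F (Matrix (Fin n) (Fin n) F) × (Fin c → Submodule F (Fin n → F)) //
        p.1 ≤ altSpace n F ∧ DirectSum.IsInternal p.2 ∧ (∀ i, p.2 i ≠ ⊥) ∧
        ∀ i j, i ≠ j → ∀ u ∈ p.2 i, ∀ u' ∈ p.2 j, ∀ A ∈ p.1, u ⬝ᵥ A *ᵥ u' = 0} : ℚ) =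
      ∑ ν ∈ partitions c n,
        (((q : ℚ) ^ (n.choose 2) * (qFact q n : ℚ)) /
            ∏ i, ((q : ℚ) ^ ((ν i).choose 2) * (qFact q (ν i) : ℚ))) *
          galois q (∑ i, (ν i).choose 2) := by
  classical
  subst hF
  have hq2 : 2 ≤ Fintype.card F := Fintype.one_lt_card
  haveI hfs1 : Finite (Submodule F (Matrix (Fin n) (Fin n) F)) :=
    Finite.of_injective _ (SetLike.coe_injective (A := Submodule F (Matrix (Fin n) (Fin n) F)))
  haveI hfs2 : Finite (Submodule F (Fin n → F)) :=
    Finite.of_injective _ (SetLike.coe_injective (A := Submodule F (Fin n → F)))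
  have E : {p : Submodule F (Matrix (Fin n) (Fin n) F) × (Fin c → Submodule F (Fin n → F)) //
      p.1 ≤ altSpace n F ∧ DirectSum.IsInternal p.2 ∧ (∀ i, p.2 i ≠ ⊥) ∧
      ∀ i j, i ≠ j → ∀ u ∈ p.2 i, ∀ u' ∈ p.2 j, ∀ A ∈ p.1, u ⬝ᵥ A *ᵥ u' = 0} ≃
      Σ U : {U : Fin c → Submodule F (Fin n → F) //
          DirectSum.IsInternal U ∧ ∀ i, U i ≠ ⊥},
        {𝒜 : Submodule F (Matrix (Fin n) (Fin n) F) //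
          𝒜 ≤ altSpace n F ⊓ orthSpace U.1} :=
    { toFun := fun p => ⟨⟨p.1.2, p.2.2.1, p.2.2.2.1⟩, ⟨p.1.1, le_inf p.2.1
        (fun A hA => mem_orthSpace.mpr
          (fun i j hij u hu u' hu' => p.2.2.2.2 i j hij u hu u' hu' A hA))⟩⟩
      invFun := fun x => ⟨(x.2.1, x.1.1), le_trans x.2.2 inf_le_left, x.1.2.1, x.1.2.2,
        fun i j hij u hu u' hu' A hA =>
          mem_orthSpace.mp (le_trans x.2.2 inf_le_right hA) i j hij u hu u' hu'⟩
      left_inv := fun p => rfl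
      right_inv := fun x => rfl }
  haveI : Fintype {U : Fin c → Submodule F (Fin n → F) //
      DirectSum.IsInternal U ∧ ∀ i, U i ≠ ⊥} := Fintype.ofFinite _
  haveI : ∀ U : {U : Fin c → Submodule F (Fin n → F) //
      DirectSum.IsInternal U ∧ ∀ i, U i ≠ ⊥},
      Fintype {𝒜 : Submodule F (Matrix (Fin n) (Fin n) F) //
        𝒜 ≤ altSpace n F ⊓ orthSpace U.1} := fun U => Fintype.ofFinite _
  rw [Nat.card_congr E, Nat.card_eq_fintype_card, Fintype.card_sigma]
  push_cast
  have hcard𝒜 : ∀ U : {U : Fin c → Submodule F (Fin n → F) //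
      DirectSum.IsInternal U ∧ ∀ i, U i ≠ ⊥},
      (Fintype.card {𝒜 : Submodule F (Matrix (Fin n) (Fin n) F) //
        𝒜 ≤ altSpace n F ⊓ orthSpace U.1} : ℚ)
      = galois (Fintype.card F) (∑ i, (Module.finrank F (U.1 i)).choose 2) := by
    intro U
    rw [← Nat.card_eq_fintype_card, Nat.card_congr
      (Submodule.MapSubtype.orderIso (altSpace n F ⊓ orthSpace U.1)).toEquiv.symm]
    rw [card_submodule_eq_galois, finrank_inf U.2.1]
  rw [Finset.sum_congr rfl (fun U _ => hcard𝒜 U)]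
  have hmaps : ∀ U : {U : Fin c → Submodule F (Fin n → F) //
      DirectSum.IsInternal U ∧ ∀ i, U i ≠ ⊥}, U ∈ Finset.univ →
      (fun i => Module.finrank F (U.1 i)) ∈ partitions c n := by
    intro U _
    rw [partitions, Finset.mem_filter, Finset.Nat.mem_antidiagonalTuple]
    refine ⟨?_, fun i => ?_⟩
    · rw [isInternal_sum_finrank U.2.1, Module.finrank_fin_fun]
    · exact Nat.pos_of_ne_zero fun h0 => U.2.2 i (Submodule.finrank_eq_zero.mp h0)
  rw [← Finset.sum_fiberwise_of_maps_to hmaps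
    (fun U => galois (Fintype.card F) (∑ i, (Module.finrank F (U.1 i)).choose 2))]
  refine Finset.sum_congr rfl fun ν hν => ?_
  have hν' := Finset.mem_filter.mp hν
  have hsum : ∑ i, ν i = n := Finset.Nat.mem_antidiagonalTuple.mp hν'.1
  have hpos : ∀ i, 0 < ν i := hν'.2
  have hconst : ∀ U ∈ Finset.univ.filter
      (fun U : {U : Fin c → Submodule F (Fin n → F) //
        DirectSum.IsInternal U ∧ ∀ i, U i ≠ ⊥} =>
        (fun i => Module.finrank F (U.1 i)) = ν),
      galois (Fintype.card F) (∑ i, (Module.finrank F (U.1 i)).choose 2)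
      = galois (Fintype.card F) (∑ i, (ν i).choose 2) := by
    intro U hU
    have := (Finset.mem_filter.mp hU).2
    rw [show (∑ i, (Module.finrank F (U.1 i)).choose 2) = ∑ i, (ν i).choose 2 from
      Finset.sum_congr rfl fun i _ => by rw [congrFun this i]]
  rw [Finset.sum_congr rfl hconst, Finset.sum_const, nsmul_eq_mul]
  congr 1
  -- the number of decompositions of type ν
  have hflat : (Finset.univ.filter
      (fun U : {U : Fin c → Submodule F (Fin n → F) //
        DirectSum.IsInternal U ∧ ∀ i, U i ≠ ⊥} =>
        (fun i => Module.finrank F (U.1 i)) = ν)).card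
      = Nat.card {U : Fin c → Submodule F (Fin n → F) //
          DirectSum.IsInternal U ∧ ∀ i, Module.finrank F (U i) = ν i} := by
    rw [← Fintype.card_subtype, Nat.card_eq_fintype_card]
    refine Fintype.card_congr
      { toFun := fun x => ⟨x.1.1, x.1.2.1, fun i => congrFun x.2 i⟩
        invFun := fun y => ⟨⟨y.1, y.2.1, fun i h => by
          have h2 := y.2.2 i
          rw [h, finrank_bot] at h2
          exact absurd h2.symm (by have := hpos i; omega)⟩, funext y.2.2⟩
        left_inv := fun x => Subtype.ext (Subtype.ext rfl)
        right_inv := fun y => Subtype.ext rfl }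
  rw [hflat]
  have hdec := card_decompositions (F := F) (V := Fin n → F) ν
    (by rw [Module.finrank_fin_fun]; exact hsum)
  rw [Module.finrank_fin_fun] at hdec
  exact count_decomp_cast hq2 ν hsum hdec
end

section
/- (Read's formula) For all integers n ≥ c ≥ 1, the number of pairs (G, (U_1, …, U_c)), where G = ([n], E) is a labelled simple graph and (U_1, …, U_c) is an ordered partition of [n] into nonempty parts such that each U_i is an independent set of G, equals Σ_{(n_1,…,n_c)} (n!/(n_1!⋯n_c!)) · 2^{C(n,2) − Σ_{i∈[c]} C(n_i,2)}, where the sum is over all ordered c-partitions (n_1,…,n_c) of n into positive integers. -/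
open BigOperators

open Finset

attribute [local instance 10] Classical.propDecidable

section Aux

lemma count_subgraphs {n : ℕ} (H : SimpleGraph (Fin n)) :
    ((Finset.univ : Finset (SimpleGraph (Fin n))).filter (· ≤ H)).card
      = 2 ^ H.edgeFinset.card := by
  rw [← Finset.card_powerset]
  refine Finset.card_bij' (α := SimpleGraph (Fin n)) (β := Finset (Sym2 (Fin n)))
    (fun G _ => G.edgeFinset) (fun s _ => SimpleGraph.fromEdgeSet ↑s) ?_ ?_ ?_ ?_
  · intro G hG
    simp only [Finset.mem_filter, Finset.mem_univ, true_and] at hG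
    simpa [Finset.mem_powerset] using SimpleGraph.edgeFinset_mono hG
  · intro s hs
    simp only [Finset.mem_powerset] at hs
    simp only [Finset.mem_filter, Finset.mem_univ, true_and]
    rw [← SimpleGraph.edgeSet_subset_edgeSet, SimpleGraph.edgeSet_fromEdgeSet]
    intro e he
    exact (SimpleGraph.mem_edgeFinset.1 (hs he.1))
  · intro G hG
    show SimpleGraph.fromEdgeSet ↑G.edgeFinset = G
    rw [SimpleGraph.coe_edgeFinset, SimpleGraph.fromEdgeSet_edgeSet]
  · intro s hs
    simp only [Finset.mem_powerset] at hs
    ext e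
    simp only [SimpleGraph.mem_edgeFinset, SimpleGraph.edgeSet_fromEdgeSet,
      Set.mem_diff, Finset.mem_coe, Set.mem_setOf_eq]
    exact ⟨fun h => h.1, fun h => ⟨h, SimpleGraph.not_isDiag_of_mem_edgeFinset (hs h)⟩⟩

lemma sq_eq_choose (m : ℕ) : m * m = 2 * m.choose 2 + m := by
  induction m with
  | zero => simp
  | succ k ih =>
    have h1 : (k+1) * (k+1) = k*k + 2*k + 1 := by ring
    have h2 : (k+1).choose 2 = k + k.choose 2 := by
      rw [Nat.choose_succ_succ, Nat.choose_one_right]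
    omega

lemma card_edge {n c : ℕ} (f : Fin n → Fin c) :
    ((⊤ : SimpleGraph (Fin c)).comap f).edgeFinset.card
      + ∑ i, ((univ.filter fun v => f v = i)).card.choose 2 = n.choose 2 := by
  have htwo := SimpleGraph.two_mul_card_edgeFinset ((⊤ : SimpleGraph (Fin c)).comap f)
  have hsplit := Finset.card_filter_add_card_filter_not
    (s := (univ : Finset (Fin n × Fin n)))
    (p := fun q => ((⊤ : SimpleGraph (Fin c)).comap f).Adj q.1 q.2)
  have hcu : (univ : Finset (Fin n × Fin n)).card = n * n := by
    simp [Finset.card_univ]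
  have hneg : ((univ : Finset (Fin n × Fin n)).filter
      (fun q => ¬ ((⊤ : SimpleGraph (Fin c)).comap f).Adj q.1 q.2)).card
      = ∑ i, ((univ.filter fun v => f v = i)).card * ((univ.filter fun v => f v = i)).card := by
    rw [Finset.card_eq_sum_card_fiberwise
      (f := fun q : Fin n × Fin n => f q.1) (t := univ) (fun q _ => Finset.mem_univ _)]
    refine Finset.sum_congr rfl fun i _ => ?_
    rw [← Finset.card_product]
    congr 1
    ext q
    simp only [Finset.mem_filter, Finset.mem_univ, true_and, Finset.mem_product,
      SimpleGraph.comap_adj, SimpleGraph.top_adj, not_not]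
    constructor
    · rintro ⟨h1, h2⟩; exact ⟨h2, h2 ▸ h1.symm⟩
    · rintro ⟨h1, h2⟩; exact ⟨h1.trans h2.symm, h1⟩
  have hn : ∑ i, ((univ.filter fun v => f v = i)).card = n := by
    have h := Finset.card_eq_sum_card_fiberwise (s := (univ : Finset (Fin n)))
      (f := f) (t := univ) (fun v _ => Finset.mem_univ _)
    rw [Finset.card_univ, Fintype.card_fin] at h
    exact h.symm
  have hsum2 : ∑ i, ((univ.filter fun v => f v = i)).card * ((univ.filter fun v => f v = i)).card
      = 2 * (∑ i, ((univ.filter fun v => f v = i)).card.choose 2) + n := by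
    simp only [sq_eq_choose]
    rw [Finset.sum_add_distrib, ← Finset.mul_sum, hn]
  have hnn := sq_eq_choose n
  set E := ((⊤ : SimpleGraph (Fin c)).comap f).edgeFinset.card
  set A := ((univ : Finset (Fin n × Fin n)).filter
      (fun q => ((⊤ : SimpleGraph (Fin c)).comap f).Adj q.1 q.2)).card
  have hA : 2 * E = A := by
    rw [htwo]
  omega

lemma multinomial_succ {c : ℕ} (ν : Fin (c+1) → ℕ) :
    Nat.multinomial Finset.univ ν
      = (∑ i, ν i).choose (ν 0) * Nat.multinomial Finset.univ (ν ∘ Fin.succ) := by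
  have huniv : (univ : Finset (Fin (c+1))) = insert 0 (univ.map (Fin.succEmb c)) := by
    ext i
    simp only [Finset.mem_univ, true_iff, Finset.mem_insert, Finset.mem_map]
    rcases Fin.eq_zero_or_eq_succ i with h | ⟨j, rfl⟩
    · exact Or.inl h
    · exact Or.inr ⟨j, by simp⟩
  have h0 : (0 : Fin (c+1)) ∉ univ.map (Fin.succEmb c) := by
    simp only [Finset.mem_map, Finset.mem_univ, true_and, not_exists]
    intro j
    exact (Fin.succ_ne_zero j)
  have hmap : Nat.multinomial (univ.map (Fin.succEmb c)) ν
      = Nat.multinomial Finset.univ (ν ∘ Fin.succ) := by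
    unfold Nat.multinomial
    rw [Finset.sum_map, Finset.prod_map]
    rfl
  have hsum : ∑ i, ν i = ν 0 + ∑ i ∈ univ.map (Fin.succEmb c), ν i := by
    rw [huniv, Finset.sum_insert h0]
  rw [huniv, Nat.multinomial_insert h0, hmap, ← hsum, huniv]

lemma count_partitions {α : Type*} [Fintype α] [DecidableEq α] :
    ∀ (c : ℕ) (ν : Fin c → ℕ) (s : Finset α), (∑ i, ν i) = s.card →
    ((Finset.univ : Finset (Fin c → Finset α)).filter
      (fun U => (∀ i, U i ⊆ s) ∧ (∀ v ∈ s, ∃! i, v ∈ U i) ∧ ∀ i, (U i).card = ν i)).card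
      = Nat.multinomial Finset.univ ν := by
  intro c
  induction c with
  | zero =>
    intro ν s hs
    have hs0 : s = ∅ := by
      rw [← Finset.card_eq_zero]
      simpa using hs.symm
    subst hs0
    rw [Finset.filter_true_of_mem (fun U _ => ⟨fun i => i.elim0, fun v hv => absurd hv (by simp),
      fun i => i.elim0⟩)]
    rw [Finset.card_univ]
    simp [Nat.multinomial]
  | succ c ih =>
    intro ν s hsum
    have hmaps : ∀ U ∈ (Finset.univ : Finset (Fin (c+1) → Finset α)).filter
        (fun U => (∀ i, U i ⊆ s) ∧ (∀ v ∈ s, ∃! i, v ∈ U i) ∧ ∀ i, (U i).card = ν i),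
        U 0 ∈ s.powersetCard (ν 0) := by
      intro U hU
      simp only [Finset.mem_filter] at hU
      exact Finset.mem_powersetCard.2 ⟨hU.2.1 0, hU.2.2.2 0⟩
    rw [Finset.card_eq_sum_card_fiberwise hmaps]
    have hstep : ∀ t ∈ s.powersetCard (ν 0),
        (((Finset.univ : Finset (Fin (c+1) → Finset α)).filter
          (fun U => (∀ i, U i ⊆ s) ∧ (∀ v ∈ s, ∃! i, v ∈ U i) ∧ ∀ i, (U i).card = ν i)).filter
          (fun U => U 0 = t)).card
        = Nat.multinomial Finset.univ (ν ∘ Fin.succ) := by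
      intro t ht
      obtain ⟨ht1, ht2⟩ := Finset.mem_powersetCard.1 ht
      have hsub : ∑ i, (ν ∘ Fin.succ) i = (s \ t).card := by
        have h1 : ∑ i : Fin (c+1), ν i = ν 0 + ∑ i : Fin c, ν i.succ := Fin.sum_univ_succ ν
        have h2 := Finset.card_sdiff_of_subset ht1
        have h3 := Finset.card_le_card ht1
        have h4 : ∑ i, (ν ∘ Fin.succ) i = ∑ i : Fin c, ν i.succ := rfl
        omega
      rw [← ih (ν ∘ Fin.succ) (s \ t) hsub]
      refine Finset.card_bij' (fun U _ => U ∘ Fin.succ) (fun V _ => Fin.cases t V) ?_ ?_ ?_ ?_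
      · intro U hU
        simp only [Finset.mem_filter, Finset.mem_univ, true_and] at hU
        obtain ⟨⟨h1, h2, h3⟩, h0⟩ := hU
        refine Finset.mem_filter.2 ⟨Finset.mem_univ _, ?_, ?_, ?_⟩
        · intro i v hv
          have hvs : v ∈ s := h1 i.succ hv
          rw [Finset.mem_sdiff]
          refine ⟨hvs, fun hvt => ?_⟩
          have hv0 : v ∈ U 0 := by rw [h0]; exact hvt
          exact Fin.succ_ne_zero i ((h2 v hvs).unique hv hv0)
        · intro v hv
          rw [Finset.mem_sdiff] at hv
          obtain ⟨j, hj, huniq⟩ := h2 v hv.1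
          have hj0 : j ≠ 0 := by
            rintro rfl
            exact hv.2 (h0 ▸ hj)
          obtain ⟨i, rfl⟩ : ∃ i : Fin c, j = i.succ := by
            rcases Fin.eq_zero_or_eq_succ j with h | h
            · exact absurd h hj0
            · exact h
          exact ⟨i, hj, fun k hk => Fin.succ_injective _ (huniq _ hk)⟩
        · intro i
          exact h3 i.succ
      · intro V hV
        simp only [Finset.mem_filter, Finset.mem_univ, true_and] at hV
        obtain ⟨g1, g2, g3⟩ := hV
        refine Finset.mem_filter.2 ⟨Finset.mem_filter.2 ⟨Finset.mem_univ _, ?_, ?_, ?_⟩, by simp⟩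
        · intro i
          induction i using Fin.cases with
          | zero => simpa using ht1
          | succ k => simpa using (g1 k).trans Finset.sdiff_subset
        · intro v hv
          by_cases hvt : v ∈ t
          · refine ⟨0, by simpa using hvt, ?_⟩
            intro j hj
            induction j using Fin.cases with
            | zero => rfl
            | succ k =>
              simp only [Fin.cases_succ] at hj
              exact absurd (Finset.mem_sdiff.1 (g1 k hj)).2 (not_not.2 hvt)
          · have hvst : v ∈ s \ t := Finset.mem_sdiff.2 ⟨hv, hvt⟩
            obtain ⟨k, hk, hu⟩ := g2 v hvst
            refine ⟨k.succ, by simpa using hk, ?_⟩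
            intro j hj
            induction j using Fin.cases with
            | zero => exact absurd (by simpa using hj) hvt
            | succ m =>
              simp only [Fin.cases_succ] at hj
              rw [hu m hj]
        · intro i
          induction i using Fin.cases with
          | zero => simpa using ht2
          | succ k => simpa using g3 k
      · intro U hU
        simp only [Finset.mem_filter] at hU
        funext i
        induction i using Fin.cases with
        | zero => simpa using hU.2.symm
        | succ k => simp
      · intro V hV
        funext i
        simp
    rw [Finset.sum_congr rfl hstep, Finset.sum_const, Finset.card_powersetCard, smul_eq_mul,
      multinomial_succ, hsum]

end Aux

/-- Read's formula: the number of pairs `(G, (U_1, …, U_c))` of a labelled simple graph on `[n]`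
together with an ordered partition of `[n]` into nonempty independent sets of `G`. -/
theorem read_formula (n c : ℕ) (hc : 1 ≤ c) (hn : c ≤ n) :
    Nat.card {p : SimpleGraph (Fin n) × (Fin c → Finset (Fin n)) //
        (∀ v : Fin n, ∃! i, v ∈ p.2 i) ∧ (∀ i, (p.2 i).Nonempty) ∧
        ∀ i, ∀ u ∈ p.2 i, ∀ v ∈ p.2 i, ¬ p.1.Adj u v} =
      ∑ ν ∈ partitions c n,
        Nat.multinomial Finset.univ ν * 2 ^ (n.choose 2 - ∑ i, (ν i).choose 2) := by
  classical
  rw [Nat.card_eq_fintype_card, Fintype.card_subtype]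
  -- helper facts for a partition U
  have key : ∀ U : Fin c → Finset (Fin n), (∀ v : Fin n, ∃! i, v ∈ U i) →
      ∃ f : Fin n → Fin c, ∀ v i, v ∈ U i ↔ f v = i := by
    intro U hU
    refine ⟨fun v => (hU v).exists.choose, fun v i => ⟨fun h => ?_, fun h => ?_⟩⟩
    · exact ((hU v).unique (hU v).exists.choose_spec h).symm ▸ rfl
    · exact h ▸ (hU v).exists.choose_spec
  have sumcard : ∀ U : Fin c → Finset (Fin n), (∀ v : Fin n, ∃! i, v ∈ U i) →
      ∑ i, (U i).card = n := by
    intro U hU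
    obtain ⟨f, hf⟩ := key U hU
    have h := Finset.card_eq_sum_card_fiberwise (s := (univ : Finset (Fin n)))
      (f := f) (t := univ) (fun v _ => Finset.mem_univ _)
    rw [Finset.card_univ, Fintype.card_fin] at h
    refine Eq.trans ?_ h.symm
    refine Finset.sum_congr rfl fun i _ => ?_
    congr 1
    ext v
    simp [hf v i]
  -- Step A: fiber over the partition component
  set T : Finset (Fin c → Finset (Fin n)) :=
    univ.filter (fun U => (∀ v : Fin n, ∃! i, v ∈ U i) ∧ ∀ i, (U i).Nonempty) with hT
  have hmapsT : ∀ p ∈ (univ : Finset (SimpleGraph (Fin n) × (Fin c → Finset (Fin n)))).filter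
      (fun p => (∀ v : Fin n, ∃! i, v ∈ p.2 i) ∧ (∀ i, (p.2 i).Nonempty) ∧
        ∀ i, ∀ u ∈ p.2 i, ∀ v ∈ p.2 i, ¬ p.1.Adj u v),
      p.2 ∈ T := by
    intro p hp
    rw [hT]
    simp only [Finset.mem_filter, Finset.mem_univ, true_and] at hp ⊢
    exact ⟨hp.1, hp.2.1⟩
  rw [Finset.card_eq_sum_card_fiberwise hmapsT]
  have hfiber : ∀ U ∈ T,
      (((univ : Finset (SimpleGraph (Fin n) × (Fin c → Finset (Fin n)))).filter
      (fun p => (∀ v : Fin n, ∃! i, v ∈ p.2 i) ∧ (∀ i, (p.2 i).Nonempty) ∧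
        ∀ i, ∀ u ∈ p.2 i, ∀ v ∈ p.2 i, ¬ p.1.Adj u v)).filter (fun p => p.2 = U)).card
      = 2 ^ (n.choose 2 - ∑ i, ((U i).card).choose 2) := by
    intro U hUT
    simp only [hT, Finset.mem_filter, Finset.mem_univ, true_and] at hUT
    obtain ⟨hU, hUne⟩ := hUT
    obtain ⟨f, hf⟩ := key U hU
    have hUi : ∀ i, univ.filter (fun v => f v = i) = U i := by
      intro i
      ext v
      simp [hf v i]
    have hEdge := card_edge f
    simp only [hUi] at hEdge
    have hcard := Nat.eq_sub_of_add_eq hEdge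
    rw [← hcard]
    refine Eq.trans ?_ ((count_subgraphs ((⊤ : SimpleGraph (Fin c)).comap f)).trans (by congr!))
    refine Finset.card_bij' (fun p _ => p.1) (fun G _ => (G, U)) ?_ ?_ ?_ ?_
    · intro p hp
      simp only [Finset.mem_filter, Finset.mem_univ, true_and] at hp
      obtain ⟨⟨h1, h2, h3⟩, h4⟩ := hp
      simp only [Finset.mem_filter, Finset.mem_univ, true_and]
      intro a b hab
      simp only [SimpleGraph.comap_adj, SimpleGraph.top_adj]
      intro hfab
      have ha : a ∈ U (f b) := by rw [← hfab]; exact (hf a (f a)).2 rfl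
      have hb : b ∈ U (f b) := (hf b (f b)).2 rfl
      rw [← h4] at ha hb
      exact h3 (f b) a ha b hb hab
    · intro G hG
      simp only [Finset.mem_filter, Finset.mem_univ, true_and] at hG ⊢
      refine ⟨⟨hU, hUne, ?_⟩, trivial⟩
      intro i u hu v hv hadj
      have := hG hadj
      simp only [SimpleGraph.comap_adj, SimpleGraph.top_adj] at this
      exact this (((hf u i).1 hu).trans ((hf v i).1 hv).symm)
    · intro p hp
      simp only [Finset.mem_filter] at hp
      exact Prod.ext rfl hp.2.symm
    · intro G hG
      rfl
  rw [Finset.sum_congr rfl hfiber]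
  -- Step B: group by size vector
  have hmapsP : ∀ U ∈ T, (fun i => (U i).card) ∈ partitions c n := by
    intro U hUT
    simp only [hT, Finset.mem_filter, Finset.mem_univ, true_and] at hUT
    simp only [partitions, Finset.mem_filter, Finset.Nat.mem_antidiagonalTuple]
    exact ⟨sumcard U hUT.1, fun i => Finset.card_pos.2 (hUT.2 i)⟩
  rw [← Finset.sum_fiberwise_of_maps_to hmapsP
    (fun U => 2 ^ (n.choose 2 - ∑ i, ((U i).card).choose 2))]
  refine Finset.sum_congr rfl fun ν hν => ?_
  simp only [partitions, Finset.mem_filter, Finset.Nat.mem_antidiagonalTuple] at hν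
  obtain ⟨hνsum, hνpos⟩ := hν
  have hconst : ∀ U ∈ T.filter (fun U => (fun i => (U i).card) = ν),
      2 ^ (n.choose 2 - ∑ i, ((U i).card).choose 2)
        = 2 ^ (n.choose 2 - ∑ i, (ν i).choose 2) := by
    intro U hUf
    simp only [Finset.mem_filter] at hUf
    have : ∀ i, (U i).card = ν i := fun i => congrFun hUf.2 i
    simp only [this]
  rw [Finset.sum_congr rfl hconst, Finset.sum_const, smul_eq_mul]
  congr 1
  -- count: T.filter (sizes = ν) has multinomial many elements
  have hset : T.filter (fun U => (fun i => (U i).card) = ν)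
      = (Finset.univ : Finset (Fin c → Finset (Fin n))).filter
        (fun U => (∀ i, U i ⊆ univ) ∧ (∀ v ∈ (univ : Finset (Fin n)), ∃! i, v ∈ U i)
          ∧ ∀ i, (U i).card = ν i) := by
    ext U
    simp only [hT, Finset.mem_filter, Finset.mem_univ, true_and]
    constructor
    · rintro ⟨⟨h1, h2⟩, h3⟩
      exact ⟨fun i => Finset.subset_univ _, fun v _ => h1 v, fun i => congrFun h3 i⟩
    · rintro ⟨h1, h2, h3⟩
      exact ⟨⟨fun v => h2 v trivial, fun i => Finset.card_pos.1 ((h3 i) ▸ hνpos i)⟩,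
        funext h3⟩
  rw [hset]
  have h := count_partitions c ν (univ : Finset (Fin n))
    (by rw [Finset.card_univ, Fintype.card_fin]; exact hνsum)
  convert h using 2
  ext V
  simp only [Finset.mem_filter]
end

section
/- (Gilbert's formula) For every n ≥ 1, n · G_n = Σ_{k=1}^{n} k · C(n,k) · CG_k · G_{n−k}; equivalently, CG_n = G_n − (1/n) · Σ_{k=1}^{n−1} k · C(n,k) · CG_k · G_{n−k}, where G_n = 2^{C(n,2)} is the number of labelled simple graphs on vertex set [n] and CG_n is the number of connected labelled simple graphs on vertex set [n]. -/
open BigOperators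
set_option linter.unusedSectionVars false

open SimpleGraph

section Aux

variable {V : Type*}

/-- Simple graphs correspond to predicates on non-diagonal unordered pairs. -/
def graphEquivSym2 (V : Type*) : SimpleGraph V ≃ ({e : Sym2 V // ¬e.IsDiag} → Prop) where
  toFun G e := e.1 ∈ G.edgeSet
  invFun f :=
    { Adj := fun a b => ∃ h : ¬(s(a, b) : Sym2 V).IsDiag, f ⟨s(a, b), h⟩
      symm := by
        refine ⟨?_⟩
        rintro a b ⟨h, hf⟩
        have hpair : (s(b, a) : Sym2 V) = s(a, b) := Sym2.eq_swap
        refine ⟨by rw [hpair]; exact h, ?_⟩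
        have : (⟨s(b, a), by rw [hpair]; exact h⟩ : {e : Sym2 V // ¬e.IsDiag}) = ⟨s(a, b), h⟩ :=
          Subtype.ext hpair
        rw [this]; exact hf
      loopless := by
        refine ⟨?_⟩
        rintro a ⟨h, -⟩
        exact h (by simp) }
  left_inv G := by
    ext a b
    simp only [SimpleGraph.mem_edgeSet]
    constructor
    · rintro ⟨h, hf⟩; exact hf
    · intro h; exact ⟨by simp [h.ne], h⟩
  right_inv f := by
    funext e
    obtain ⟨e, he⟩ := e
    induction e using Sym2.ind with
    | _ a b =>
      simp only [SimpleGraph.mem_edgeSet, eq_iff_iff]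
      exact ⟨fun ⟨h, hf⟩ => hf, fun hf => ⟨he, hf⟩⟩

lemma card_simpleGraph (V : Type*) [Finite V] :
    Nat.card (SimpleGraph V) = 2 ^ (Nat.card V).choose 2 := by
  classical
  cases nonempty_fintype V
  rw [Nat.card_congr (graphEquivSym2 V), Nat.card_fun, Nat.card_eq_fintype_card,
    Nat.card_eq_fintype_card, Nat.card_eq_fintype_card, Fintype.card_prop,
    Sym2.card_subtype_not_diag]

variable [DecidableEq V] {s : Finset V}

/-- Glue a graph on `s` and a graph on its complement into a graph on `V`. -/
def glue (s : Finset V) (H : SimpleGraph {x : V // x ∈ s}) (K : SimpleGraph {x : V // x ∉ s}) :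
    SimpleGraph V where
  Adj a b := (∃ (ha : a ∈ s) (hb : b ∈ s), H.Adj ⟨a, ha⟩ ⟨b, hb⟩) ∨
    (∃ (ha : a ∉ s) (hb : b ∉ s), K.Adj ⟨a, ha⟩ ⟨b, hb⟩)
  symm := by
    refine ⟨?_⟩
    rintro a b (⟨ha, hb, h⟩ | ⟨ha, hb, h⟩)
    · exact Or.inl ⟨hb, ha, h.symm⟩
    · exact Or.inr ⟨hb, ha, h.symm⟩
  loopless := by
    refine ⟨?_⟩
    rintro a (⟨ha, hb, h⟩ | ⟨ha, hb, h⟩)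
    · exact H.irrefl h
    · exact K.irrefl h

lemma glue_comap_in (H : SimpleGraph {x : V // x ∈ s}) (K : SimpleGraph {x : V // x ∉ s}) :
    (glue s H K).comap (Subtype.val : {x : V // x ∈ s} → V) = H := by
  ext ⟨a, ha⟩ ⟨b, hb⟩
  constructor
  · rintro (⟨ha', hb', h⟩ | ⟨ha', hb', h⟩)
    · exact h
    · exact absurd ha ha'
  · intro h
    exact Or.inl ⟨ha, hb, h⟩

lemma glue_comap_out (H : SimpleGraph {x : V // x ∈ s}) (K : SimpleGraph {x : V // x ∉ s}) :
    (glue s H K).comap (Subtype.val : {x : V // x ∉ s} → V) = K := by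
  ext ⟨a, ha⟩ ⟨b, hb⟩
  constructor
  · rintro (⟨ha', hb', h⟩ | ⟨ha', hb', h⟩)
    · exact absurd ha' ha
    · exact h
  · intro h
    exact Or.inr ⟨ha, hb, h⟩

lemma glue_adj_mem {H : SimpleGraph {x : V // x ∈ s}} {K : SimpleGraph {x : V // x ∉ s}}
    {a b : V} (h : (glue s H K).Adj a b) : a ∈ s ↔ b ∈ s := by
  rcases h with ⟨ha, hb, -⟩ | ⟨ha, hb, -⟩
  · simp [ha, hb]
  · simp [ha, hb]

lemma glue_reachable {H : SimpleGraph {x : V // x ∈ s}} {K : SimpleGraph {x : V // x ∉ s}}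
    {a b : V} (h : (glue s H K).Reachable a b) : a ∈ s ↔ b ∈ s := by
  obtain ⟨w⟩ := h
  induction w with
  | nil => rfl
  | cons h _ ih => exact (glue_adj_mem h).trans ih

/-- The inclusion homomorphism from `H` into the glued graph. -/
def glueHomIn (H : SimpleGraph {x : V // x ∈ s}) (K : SimpleGraph {x : V // x ∉ s}) :
    H →g glue s H K where
  toFun := Subtype.val
  map_rel' := fun {x y} h => Or.inl ⟨x.2, y.2, h⟩

lemma glue_reach_of_H {H : SimpleGraph {x : V // x ∈ s}} {K : SimpleGraph {x : V // x ∉ s}}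
    {x y : {x : V // x ∈ s}} (h : H.Reachable x y) : (glue s H K).Reachable x.1 y.1 :=
  h.map (glueHomIn H K)

lemma walk_reach {G : SimpleGraph V} (hs : ∀ a b, a ∈ s → G.Adj a b → b ∈ s) :
    ∀ {u w : V} (_ : G.Walk u w) (hu : u ∈ s) (hw : w ∈ s),
      (G.comap (Subtype.val : {x : V // x ∈ s} → V)).Reachable ⟨u, hu⟩ ⟨w, hw⟩ := by
  intro u w p
  induction p with
  | nil => intro hu hw; exact Reachable.refl _
  | @cons u x w h p ih =>
    intro hu hw
    have hx : x ∈ s := hs _ _ hu h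
    exact (SimpleGraph.Adj.reachable
      (show (G.comap (Subtype.val : {x : V // x ∈ s} → V)).Adj ⟨u, hu⟩ ⟨x, hx⟩ from h)).trans
      (ih hx hw)

lemma glue_decompose {G : SimpleGraph V} (hs : ∀ a b, a ∈ s → G.Adj a b → b ∈ s) :
    glue s (G.comap (Subtype.val : {x : V // x ∈ s} → V))
      (G.comap (Subtype.val : {x : V // x ∉ s} → V)) = G := by
  have hs' : ∀ a b, a ∉ s → G.Adj a b → b ∉ s := by
    intro a b ha hab hb
    exact ha (hs b a hb hab.symm)
  ext a b
  constructor
  · rintro (⟨ha, hb, h⟩ | ⟨ha, hb, h⟩) <;> exact h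
  · intro h
    by_cases ha : a ∈ s
    · exact Or.inl ⟨ha, hs _ _ ha h, h⟩
    · exact Or.inr ⟨ha, hs' _ _ ha h, h⟩

/-- The connected component of `v` in `G`, as a `Finset`. -/
noncomputable def comp (G : SimpleGraph V) (v : V) [Finite V] : Finset V :=
  (Set.toFinite {x | G.Reachable v x}).toFinset

variable [Finite V]

lemma mem_comp {G : SimpleGraph V} {v a : V} : a ∈ comp G v ↔ G.Reachable v a := by
  simp [comp]

/-- The main bijection: pairs `(v, G)` whose component of `v` is `s` correspond to triples
of a vertex of `s`, a connected graph on `s` and an arbitrary graph on the complement. -/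
noncomputable def fiberEquiv (s : Finset V) :
    {p : V × SimpleGraph V // comp p.2 p.1 = s} ≃
      {x : V // x ∈ s} × {H : SimpleGraph {x : V // x ∈ s} // H.Connected} ×
        SimpleGraph {x : V // x ∉ s} where
  toFun := fun ⟨⟨v, G⟩, h⟩ => by
    have hv : v ∈ s := h ▸ mem_comp.2 (Reachable.refl v)
    have hcl : ∀ a b, a ∈ s → G.Adj a b → b ∈ s := by
      intro a b ha hab
      rw [← h] at ha ⊢
      exact mem_comp.2 ((mem_comp.1 ha).trans hab.reachable)
    refine ⟨⟨v, hv⟩, ⟨G.comap (Subtype.val : {x : V // x ∈ s} → V), ?_⟩,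
      G.comap (Subtype.val : {x : V // x ∉ s} → V)⟩
    haveI : Nonempty {x : V // x ∈ s} := ⟨⟨v, hv⟩⟩
    refine ⟨?_⟩
    rintro ⟨a, ha⟩ ⟨b, hb⟩
    have hva : G.Reachable v a := mem_comp.1 (h ▸ ha)
    have hvb : G.Reachable v b := mem_comp.1 (h ▸ hb)
    obtain ⟨p⟩ := hva.symm.trans hvb
    exact walk_reach hcl p ha hb
  invFun := fun ⟨⟨v, hv⟩, ⟨H, hH⟩, K⟩ =>
    ⟨(v, glue s H K), by
      ext a
      rw [mem_comp]
      constructor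
      · intro h
        exact (glue_reachable h).1 hv
      · intro ha
        exact glue_reach_of_H (hH.preconnected ⟨v, hv⟩ ⟨a, ha⟩)⟩
  left_inv := by
    rintro ⟨⟨v, G⟩, h⟩
    have hcl : ∀ a b, a ∈ s → G.Adj a b → b ∈ s := by
      intro a b ha hab
      rw [← h] at ha ⊢
      exact mem_comp.2 ((mem_comp.1 ha).trans hab.reachable)
    exact Subtype.ext (Prod.ext rfl (glue_decompose hcl))
  right_inv := by
    rintro ⟨⟨v, hv⟩, ⟨H, hH⟩, K⟩
    refine Prod.ext rfl (Prod.ext (Subtype.ext ?_) ?_)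
    · exact glue_comap_in H K
    · exact glue_comap_out H K

/-- Transport of simple graphs along an equivalence of vertex types. -/
def graphCongr {α β : Type*} (e : α ≃ β) : SimpleGraph α ≃ SimpleGraph β where
  toFun G := G.comap (e.symm : β → α)
  invFun G := G.comap (e : α → β)
  left_inv G := by ext a b; simp
  right_inv G := by ext a b; simp

/-- `graphCongr` preserves connectivity. -/
def graphCongrIso {α β : Type*} (e : α ≃ β) (G : SimpleGraph α) :
    G ≃g (G.comap (e.symm : β → α)) :=
  ⟨e, by simp⟩

end Aux

/-- The number of connected labelled simple graphs on vertex set `[k]`. -/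
noncomputable def CG (k : ℕ) : ℕ := Nat.card {G : SimpleGraph (Fin k) // G.Connected}

lemma card_connected_congr {k : ℕ} {α : Type*} (e : α ≃ Fin k) :
    Nat.card {H : SimpleGraph α // H.Connected} = CG k := by
  refine Nat.card_congr (Equiv.subtypeEquiv (graphCongr e) fun H => ?_)
  exact (graphCongrIso e H).connected_iff

/-- Gilbert's formula for the number of connected labelled graphs. -/
theorem gilbert_formula (n : ℕ) (hn : 1 ≤ n) :
    (n * 2 ^ n.choose 2 =
        ∑ k ∈ Finset.Icc 1 n, k * n.choose k * CG k * 2 ^ (n - k).choose 2) ∧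
      ((CG n : ℚ) = 2 ^ n.choose 2 - (1 / (n : ℚ)) *
        ∑ k ∈ Finset.Icc 1 (n - 1),
          (k : ℚ) * (n.choose k : ℚ) * (CG k : ℚ) * 2 ^ (n - k).choose 2) := by
  classical
  have h1 : Nat.card (Fin n × SimpleGraph (Fin n)) = n * 2 ^ n.choose 2 := by
    rw [Nat.card_prod, Nat.card_eq_fintype_card, Fintype.card_fin, card_simpleGraph,
      Nat.card_eq_fintype_card, Fintype.card_fin]
  letI instF : ∀ s : Finset (Fin n),
      Fintype {p : Fin n × SimpleGraph (Fin n) // comp p.2 p.1 = s} :=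
    fun _ => Fintype.ofFinite _
  have h2 : Nat.card (Fin n × SimpleGraph (Fin n)) =
      ∑ s : Finset (Fin n), Nat.card {p : Fin n × SimpleGraph (Fin n) // comp p.2 p.1 = s} := by
    rw [← Nat.card_congr
      (Equiv.sigmaFiberEquiv (fun p : Fin n × SimpleGraph (Fin n) => comp p.2 p.1)),
      Nat.card_eq_fintype_card, Fintype.card_sigma]
    exact Finset.sum_congr rfl fun s _ => Nat.card_eq_fintype_card.symm
  have h3 : ∀ s : Finset (Fin n),
      Nat.card {p : Fin n × SimpleGraph (Fin n) // comp p.2 p.1 = s} =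
        s.card * (CG s.card * 2 ^ (n - s.card).choose 2) := by
    intro s
    rw [Nat.card_congr (fiberEquiv s), Nat.card_prod, Nat.card_prod]
    congr 1
    · rw [Nat.card_eq_fintype_card, Fintype.card_coe]
    congr 1
    · exact card_connected_congr s.equivFin
    · rw [card_simpleGraph]
      congr 2
      rw [Nat.card_eq_fintype_card, Fintype.card_subtype_compl, Fintype.card_fin,
        Fintype.card_coe]
  have hmap : ∀ s ∈ (Finset.univ : Finset (Finset (Fin n))), s.card ∈ Finset.range (n + 1) := by
    intro s _
    rw [Finset.mem_range, Nat.lt_succ_iff]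
    exact le_trans (Finset.card_le_univ s) (by simp)
  have h4 : (∑ s : Finset (Fin n), s.card * (CG s.card * 2 ^ (n - s.card).choose 2)) =
      ∑ k ∈ Finset.range (n + 1), n.choose k * (k * (CG k * 2 ^ (n - k).choose 2)) := by
    rw [← Finset.sum_fiberwise_of_maps_to hmap
      (fun s : Finset (Fin n) => s.card * (CG s.card * 2 ^ (n - s.card).choose 2))]
    refine Finset.sum_congr rfl fun k _ => ?_
    have hfilt : Finset.filter (fun s : Finset (Fin n) => s.card = k) Finset.univ =
        Finset.powersetCard k Finset.univ := by
      rw [Finset.powersetCard_eq_filter, Finset.powerset_univ]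
    calc ∑ s ∈ Finset.filter (fun i : Finset (Fin n) => i.card = k) Finset.univ,
          s.card * (CG s.card * 2 ^ (n - s.card).choose 2)
        = ∑ _s ∈ Finset.filter (fun i : Finset (Fin n) => i.card = k) Finset.univ,
            k * (CG k * 2 ^ (n - k).choose 2) := by
          refine Finset.sum_congr rfl fun s hs => ?_
          rw [(Finset.mem_filter.mp hs).2]
      _ = n.choose k * (k * (CG k * 2 ^ (n - k).choose 2)) := by
          rw [Finset.sum_const, hfilt, Finset.card_powersetCard, Finset.card_univ,
            Fintype.card_fin, smul_eq_mul]
  have key : n * 2 ^ n.choose 2 =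
      ∑ k ∈ Finset.Icc 1 n, k * n.choose k * CG k * 2 ^ (n - k).choose 2 := by
    have hsub : Finset.Icc 1 n ⊆ Finset.range (n + 1) := by
      intro k hk
      rw [Finset.mem_Icc] at hk
      rw [Finset.mem_range]
      omega
    have hzero : ∀ k ∈ Finset.range (n + 1), k ∉ Finset.Icc 1 n →
        n.choose k * (k * (CG k * 2 ^ (n - k).choose 2)) = 0 := by
      intro k hk hk'
      rw [Finset.mem_range] at hk
      rw [Finset.mem_Icc] at hk'
      have hk0 : k = 0 := by omega
      simp [hk0]
    have h5 : ∑ k ∈ Finset.Icc 1 n, n.choose k * (k * (CG k * 2 ^ (n - k).choose 2)) =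
        ∑ k ∈ Finset.range (n + 1), n.choose k * (k * (CG k * 2 ^ (n - k).choose 2)) :=
      Finset.sum_subset hsub hzero
    rw [← h1, h2, Finset.sum_congr rfl fun s _ => h3 s, h4, ← h5]
    exact Finset.sum_congr rfl fun k _ => by ring
  refine ⟨key, ?_⟩
  obtain ⟨m, rfl⟩ : ∃ m, n = m + 1 := ⟨n - 1, (Nat.succ_pred_eq_of_pos hn).symm⟩
  rw [Finset.sum_Icc_succ_top (by omega)] at key
  have hlast : (m + 1) * (m + 1).choose (m + 1) * CG (m + 1) *
      2 ^ (m + 1 - (m + 1)).choose 2 = (m + 1) * CG (m + 1) := by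
    rw [Nat.choose_self, Nat.sub_self]
    norm_num [Nat.choose_eq_zero_of_lt]
  rw [hlast] at key
  have keyQ := congrArg (Nat.cast : ℕ → ℚ) key
  push_cast at keyQ
  have hm : (m + 1 : ℚ) ≠ 0 := by positivity
  simp only [Nat.add_sub_cancel]
  push_cast
  field_simp
  linarith [keyQ]
end

section
/- Let F be a field, n ≥ 2, and let G = ([n], E) be a labelled simple graph with 𝒜_G ≤ Λ(n,F) the alternating matrix space spanned by the elementary alternating matrices A_{i,j} for {i,j} ∈ E. Then G is disconnected if and only if 𝒜_G is orthogonally decomposable. -/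
open Matrix BigOperators

/-- The elementary alternating matrix `A_{i,j}`. -/
def elemAlt (n : ℕ) (F : Type) [Field F] (i j : Fin n) : Matrix (Fin n) (Fin n) F :=
  Matrix.single i j 1 - Matrix.single j i 1

/-- The alternating matrix space `𝒜_G` spanned by the elementary alternating matrices of the
edges of a graph `G`. -/
def graphSpace (n : ℕ) (F : Type) [Field F] (G : SimpleGraph (Fin n)) :
    Submodule F (Matrix (Fin n) (Fin n) F) :=
  Submodule.span F {A | ∃ i j, G.Adj i j ∧ A = elemAlt n F i j}

lemma dot_std {n : ℕ} {F : Type} [Field F] (i j : Fin n) (u u' : Fin n → F) :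
    u ⬝ᵥ (Matrix.single i j (1:F)) *ᵥ u' = u i * u' j := by
  simp only [Matrix.mulVec, dotProduct, Matrix.single, Matrix.of_apply, ite_and,
    ite_mul, one_mul, zero_mul, mul_ite, mul_zero]
  simp [Finset.sum_ite_eq, Finset.mul_sum]

lemma dot_elemAlt {n : ℕ} {F : Type} [Field F] (i j : Fin n) (u u' : Fin n → F) :
    u ⬝ᵥ (elemAlt n F i j) *ᵥ u' = u i * u' j - u j * u' i := by
  rw [elemAlt, Matrix.sub_mulVec, dotProduct_sub, dot_std, dot_std]

/-- The coordinate subspace of vectors vanishing outside `S`. -/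
def coordSub {n : ℕ} (F : Type) [Field F] (S : Set (Fin n)) : Submodule F (Fin n → F) where
  carrier := {v | ∀ x ∉ S, v x = 0}
  add_mem' := fun ha hb x hx => by simp [ha x hx, hb x hx]
  zero_mem' := fun x _ => rfl
  smul_mem' := fun c v hv x hx => by simp [hv x hx]

lemma mem_coordSub {n : ℕ} {F : Type} [Field F] {S : Set (Fin n)} {v : Fin n → F} :
    v ∈ coordSub F S ↔ ∀ x ∉ S, v x = 0 := Iff.rfl

/-- `G` is disconnected iff `𝒜_G` is orthogonally decomposable, i.e. admits a direct sum
decomposition `Fⁿ = U_1 ⊕ ⋯ ⊕ U_k`, `k ≥ 2`, into nonzero subspaces that are pairwise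
orthogonal with respect to every matrix of `𝒜_G`. -/
theorem disconnected_iff_orthogonally_decomposable (n : ℕ) (hn : 2 ≤ n)
    (F : Type) [Field F] (G : SimpleGraph (Fin n)) :
    ¬ G.Connected ↔
      ∃ (k : ℕ), 2 ≤ k ∧ ∃ U : Fin k → Submodule F (Fin n → F),
        DirectSum.IsInternal U ∧ (∀ i, U i ≠ ⊥) ∧
        ∀ i j, i ≠ j → ∀ u ∈ U i, ∀ u' ∈ U j, ∀ A ∈ graphSpace n F G,
          u ⬝ᵥ A *ᵥ u' = 0 := by
  classical
  constructor
  · -- disconnected → decomposable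
    intro hnc
    have hnonempty : Nonempty (Fin n) := ⟨⟨0, by omega⟩⟩
    rw [SimpleGraph.connected_iff] at hnc
    push_neg at hnc
    have hpre : ¬ G.Preconnected := fun h => not_isEmpty_of_nonempty (Fin n) (hnc h)
    rw [SimpleGraph.Preconnected] at hpre
    push_neg at hpre
    obtain ⟨a, b, hab⟩ := hpre
    set S : Set (Fin n) := {x | G.Reachable a x} with hS
    have haS : a ∈ S := SimpleGraph.Reachable.refl a
    have hbS : b ∉ S := hab
    refine ⟨2, le_refl 2, fun t => if t = 0 then coordSub F S else coordSub F Sᶜ, ?_, ?_, ?_⟩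
    · rw [DirectSum.isInternal_submodule_iff_isCompl _ (i := 0) (j := 1)
        (by decide) (by ext x; fin_cases x <;> simp)]
      simp only [if_pos rfl, if_neg (by decide : (1 : Fin 2) ≠ 0)]
      constructor
      · rw [Submodule.disjoint_def]
        intro v hv1 hv2
        funext x
        by_cases hx : x ∈ S
        · exact hv2 x (by simp [hx])
        · exact hv1 x hx
      · rw [codisjoint_iff, eq_top_iff]
        intro v _
        rw [Submodule.mem_sup]
        refine ⟨fun x => if x ∈ S then v x else 0, fun x hx => by simp [hx],
                fun x => if x ∈ S then 0 else v x, fun x hx => by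
                  simp at hx; simp [hx], ?_⟩
        funext x
        by_cases hx : x ∈ S <;> simp [hx]
    · intro i
      fin_cases i
      · simp only [if_pos rfl]
        rw [Submodule.ne_bot_iff]
        refine ⟨Pi.single a 1, fun x hx => Pi.single_eq_of_ne (fun h => hx (by rw [h]; exact haS)) 1, ?_⟩
        intro h
        have := congrFun h a
        simp [Pi.single_eq_same] at this
      · simp only [if_neg (by decide : (1 : Fin 2) ≠ 0)]
        rw [Submodule.ne_bot_iff]
        refine ⟨Pi.single b 1, fun x hx => Pi.single_eq_of_ne
          (fun h => hbS (by rw [← h]; simpa using hx)) 1, ?_⟩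
        intro h
        have := congrFun h b
        simp [Pi.single_eq_same] at this
    · intro i j hij u hu u' hu' A hA
      -- key pointwise fact
      have key : ∀ p q : Fin n, G.Adj p q → u p * u' q - u q * u' p = 0 := by
        intro p q hpq
        have hpqS : p ∈ S ↔ q ∈ S :=
          ⟨fun h => h.trans hpq.reachable, fun h => h.trans hpq.symm.reachable⟩
        have cases2 : (u ∈ coordSub F S ∧ u' ∈ coordSub F Sᶜ) ∨
            (u ∈ coordSub F Sᶜ ∧ u' ∈ coordSub F S) := by
          fin_cases i <;> fin_cases j <;> simp_all
        rcases cases2 with ⟨h1, h2⟩ | ⟨h1, h2⟩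
        · by_cases hp : p ∈ S
          · have hq : q ∈ S := hpqS.mp hp
            rw [h2 p (by simp [hp]), h2 q (by simp [hq])]; ring
          · have hq : q ∉ S := fun h => hp (hpqS.mpr h)
            rw [h1 p hp, h1 q hq]; ring
        · by_cases hp : p ∈ S
          · have hq : q ∈ S := hpqS.mp hp
            rw [h1 p (by simp [hp]), h1 q (by simp [hq])]; ring
          · have hq : q ∉ S := fun h => hp (hpqS.mpr h)
            rw [h2 p hp, h2 q hq]; ring
      induction hA using Submodule.span_induction with
      | mem A hA =>
        obtain ⟨p, q, hpq, rfl⟩ := hA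
        rw [dot_elemAlt]
        exact key p q hpq
      | zero => simp
      | add A B _ _ hA hB => rw [Matrix.add_mulVec, dotProduct_add, hA, hB, add_zero]
      | smul c A _ hA => rw [Matrix.smul_mulVec, dotProduct_smul, hA, smul_zero]
  · -- decomposable → disconnected
    rintro ⟨k, hk, U, hInt, hne, horth⟩ hcon
    have htop : iSup U = ⊤ := hInt.submodule_iSup_eq_top
    -- every coordinate is hit by some component
    have coord : ∀ i : Fin n, ∃ a, ∃ u ∈ U a, u i ≠ 0 := by
      intro i
      by_contra h
      push_neg at h
      have hle : iSup U ≤ LinearMap.ker (LinearMap.proj (R := F) (φ := fun _ : Fin n => F) i) := by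
        refine iSup_le fun a v hv => ?_
        simpa using h a v hv
      rw [htop, top_le_iff] at hle
      have : Pi.single i (1 : F) ∈ LinearMap.ker (LinearMap.proj i) := hle ▸ Submodule.mem_top
      simp [LinearMap.mem_ker, Pi.single_eq_same] at this
    -- orthogonality gives determinant conditions on edges
    have det0 : ∀ {a b : Fin k}, a ≠ b → ∀ {p q : Fin n}, G.Adj p q →
        ∀ u ∈ U a, ∀ w ∈ U b, u p * w q - u q * w p = 0 := by
      intro a b hab p q hpq u hu w hw
      have := horth a b hab u hu w hw (elemAlt n F p q)
        (Submodule.subset_span ⟨p, q, hpq, rfl⟩)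
      rwa [dot_elemAlt] at this
    -- no two distinct components can both be nonzero on an edge
    have notwo : ∀ {p q : Fin n}, G.Adj p q → ∀ {a b : Fin k}, a ≠ b →
        ∀ u ∈ U a, (u p ≠ 0 ∨ u q ≠ 0) → ∀ w ∈ U b, (w p ≠ 0 ∨ w q ≠ 0) → False := by
      intro p q hpq a b hab u hu hu0 w hw hw0
      set L : (Fin n → F) →ₗ[F] F :=
        u p • LinearMap.proj q - u q • LinearMap.proj p with hL
      have hLapp : ∀ v : Fin n → F, L v = u p * v q - u q * v p := by
        intro v; simp [hL, smul_eq_mul]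
      have hker : ∀ c, U c ≤ LinearMap.ker L := by
        intro c v hv
        rw [LinearMap.mem_ker, hLapp]
        by_cases hc : c = a
        · subst hc
          have h1 : w p * v q - w q * v p = 0 := det0 (Ne.symm hab) hpq w hw v hv
          have h2 : u p * w q - u q * w p = 0 := det0 hab hpq u hu w hw
          rcases hw0 with hwp | hwq
          · have hmul : (u p * v q - u q * v p) * w p = 0 := by
              linear_combination u p * h1 + v p * h2
            exact (mul_eq_zero.mp hmul).resolve_right hwp
          · have hmul : (u p * v q - u q * v p) * w q = 0 := by
              linear_combination u q * h1 + v q * h2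
            exact (mul_eq_zero.mp hmul).resolve_right hwq
        · exact det0 (fun h => hc h.symm) hpq u hu v hv
      have hker' : iSup U ≤ LinearMap.ker L := iSup_le hker
      rw [htop, top_le_iff] at hker'
      have hp0 : u q = 0 := by
        have : Pi.single p 1 ∈ LinearMap.ker L := by rw [hker']; exact Submodule.mem_top
        rw [LinearMap.mem_ker, hLapp] at this
        simpa [Pi.single_eq_same, Pi.single_eq_of_ne (G.ne_of_adj hpq).symm] using this
      have hq0 : u p = 0 := by
        have : Pi.single q 1 ∈ LinearMap.ker L := by rw [hker']; exact Submodule.mem_top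
        rw [LinearMap.mem_ker, hLapp] at this
        simpa [Pi.single_eq_same, Pi.single_eq_of_ne (G.ne_of_adj hpq)] using this
      rcases hu0 with h | h
      · exact h hq0
      · exact h hp0
    -- every vertex has a neighbor
    have neighbor : ∀ i : Fin n, ∃ j, G.Adj i j := by
      intro i
      obtain ⟨j, hj⟩ := Fintype.exists_ne_of_one_lt_card (by simp; omega) i
      obtain ⟨wk⟩ := hcon.preconnected i j
      cases wk with
      | nil => exact absurd rfl (Ne.symm hj)
      | cons h _ => exact ⟨_, h⟩
    -- the distinguished component
    obtain ⟨a₀, u₀, hu₀, h0⟩ := coord ⟨0, by omega⟩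
    -- every vertex is hit by the distinguished component
    have Qall : ∀ i : Fin n, ∃ u ∈ U a₀, u i ≠ 0 := by
      have step : ∀ (x y : Fin n), G.Walk x y → (∃ u ∈ U a₀, u x ≠ 0) →
          ∃ u ∈ U a₀, u y ≠ 0 := by
        intro x y wk
        induction wk with
        | nil => exact id
        | @cons x z y h p ih =>
          intro ⟨u, hu, hx⟩
          refine ih ?_
          obtain ⟨c, u', hu', hz⟩ := coord z
          by_cases hc : c = a₀
          · exact ⟨u', hc ▸ hu', hz⟩
          · exact absurd (notwo h hc u' hu' (Or.inr hz) u hu (Or.inl hx)) (fun f => f)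
      intro i
      obtain ⟨wk⟩ := hcon.preconnected ⟨0, by omega⟩ i
      exact step _ _ wk ⟨u₀, hu₀, h0⟩
    -- find another component, which must be zero
    obtain ⟨b, hb⟩ := Fintype.exists_ne_of_one_lt_card (by simp; omega) a₀
    refine hne b ?_
    rw [Submodule.eq_bot_iff]
    intro w hw
    funext i
    by_contra hwi
    obtain ⟨j, hij⟩ := neighbor i
    obtain ⟨u, hu, hui⟩ := Qall i
    exact notwo hij (Ne.symm hb) u hu (Or.inl hui) w hw (Or.inl hwi)
end

section
/- Let F be a field and G = ([n], E) a labelled simple graph, with 𝒜_G ≤ Λ(n,F) the alternating matrix space spanned by the elementary alternating matrices A_{i,j} for {i,j} ∈ E. Then G hasscheme a perfect matching if and only if 𝒜_G contains an invertible (full-rank) matrix. -/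
open Matrix BigOperators
set_option maxHeartbeats 1600000

variable {n : ℕ} {F : Type} [Field F] {G : SimpleGraph (Fin n)}

lemma graphSpace_apply_eq_zero {A : Matrix (Fin n) (Fin n) F}
    (hA : A ∈ graphSpace n F G) {i j : Fin n} (h : ¬ G.Adj i j) : A i j = 0 := by
  induction hA using Submodule.span_induction with
  | mem x hx =>
    obtain ⟨a, b, hab, rfl⟩ := hx
    simp only [elemAlt, Matrix.sub_apply, Matrix.single, Matrix.of_apply]
    have h1 : ¬ (a = i ∧ b = j) := by rintro ⟨rfl, rfl⟩; exact h hab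
    have h2 : ¬ (b = i ∧ a = j) := by rintro ⟨rfl, rfl⟩; exact h hab.symm
    rw [if_neg h1, if_neg h2, sub_zero]
  | zero => simp
  | add x y _ _ hx hy => simp [Matrix.add_apply, hx, hy]
  | smul a x _ hx => simp [Matrix.smul_apply, hx]

lemma graphSpace_skew {A : Matrix (Fin n) (Fin n) F}
    (hA : A ∈ graphSpace n F G) (i j : Fin n) : A j i = - A i j := by
  induction hA using Submodule.span_induction with
  | mem x hx =>
    obtain ⟨a, b, hab, rfl⟩ := hx
    simp only [elemAlt, Matrix.sub_apply, Matrix.single, Matrix.of_apply]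
    by_cases h1 : a = i ∧ b = j
    · obtain ⟨rfl, rfl⟩ := h1
      rw [if_neg, if_pos ⟨rfl, rfl⟩, if_pos ⟨rfl, rfl⟩, if_neg]
      · ring
      · rintro ⟨rfl, -⟩; exact G.loopless.irrefl _ hab
      · rintro ⟨rfl, -⟩; exact G.loopless.irrefl _ hab
    · by_cases h2 : b = i ∧ a = j
      · obtain ⟨rfl, rfl⟩ := h2
        rw [if_pos ⟨rfl, rfl⟩, if_neg, if_neg, if_pos ⟨rfl, rfl⟩]
        · ring
        · rintro ⟨rfl, -⟩; exact G.loopless.irrefl _ hab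
        · rintro ⟨rfl, -⟩; exact G.loopless.irrefl _ hab
      · rw [if_neg, if_neg, if_neg h2, if_neg h1] <;> simp_all [and_comm]
  | zero => simp
  | add x y _ _ hx hy => simp [Matrix.add_apply, hx, hy]; ring
  | smul a x _ hx => simp [Matrix.smul_apply, hx]

section Perm
open Equiv Equiv.Perm Finset
variable {α : Type*} [Fintype α] [DecidableEq α]


/-- `σ` with the cycle of `x₀` reversed. -/
def revAt (σ : Perm α) (x₀ : α) : Perm α := σ * (σ.cycleOf x₀)⁻¹ * (σ.cycleOf x₀)⁻¹

lemma revAt_apply (σ : Perm α) (x₀ y : α) :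
    revAt σ x₀ y = if y ∈ (σ.cycleOf x₀).support then (σ.cycleOf x₀)⁻¹ y else σ y := by
  set c := σ.cycleOf x₀ with hc
  have happ : revAt σ x₀ y = σ (c⁻¹ (c⁻¹ y)) := rfl
  by_cases hy : y ∈ c.support
  · rw [if_pos hy]
    have h1 : c⁻¹ y ∈ c.support := by
      rw [← Equiv.Perm.support_inv c]
      exact Equiv.Perm.apply_mem_support.mpr (by rwa [Equiv.Perm.support_inv])
    have h2 : c⁻¹ (c⁻¹ y) ∈ c.support := by
      rw [← Equiv.Perm.support_inv c]
      exact Equiv.Perm.apply_mem_support.mpr (by rwa [Equiv.Perm.support_inv])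
    have hsc : σ.SameCycle x₀ (c⁻¹ (c⁻¹ y)) := (Equiv.Perm.mem_support_cycleOf_iff.mp h2).1
    have : c (c⁻¹ (c⁻¹ y)) = σ (c⁻¹ (c⁻¹ y)) := by
      rw [hc, Equiv.Perm.cycleOf_apply, if_pos hsc]
    rw [happ, ← this, Equiv.Perm.inv_def, Equiv.apply_symm_apply]
  · rw [if_neg hy, happ]
    have h1 : c⁻¹ y = y := by
      have := Equiv.Perm.notMem_support.mp (by rwa [Equiv.Perm.support_inv c] : y ∉ c⁻¹.support)
      exact this
    rw [h1, h1]

lemma cycleOf_revAt (σ : Perm α) (x₀ : α) (hx₀ : x₀ ∈ σ.support) (y : α) :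
    (revAt σ x₀).cycleOf y =
      if y ∈ (σ.cycleOf x₀).support then (σ.cycleOf x₀)⁻¹ else σ.cycleOf y := by
  set c := σ.cycleOf x₀ with hc
  have hccyc : c.IsCycle := Equiv.Perm.isCycle_cycleOf σ (Equiv.Perm.mem_support.mp hx₀)
  have hcfac : c ∈ σ.cycleFactorsFinset := Equiv.Perm.cycleOf_mem_cycleFactorsFinset_iff.mpr hx₀
  have hcfac' : c⁻¹ ∈ (revAt σ x₀).cycleFactorsFinset := by
    rw [Equiv.Perm.mem_cycleFactorsFinset_iff]
    refine ⟨hccyc.inv, fun z hz => ?_⟩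
    rw [Equiv.Perm.support_inv] at hz
    rw [revAt_apply, if_pos hz]
  by_cases hy : y ∈ c.support
  · rw [if_pos hy]
    exact (Equiv.Perm.cycle_is_cycleOf (by rwa [Equiv.Perm.support_inv]) hcfac').symm
  · rw [if_neg hy]
    by_cases hyfix : σ y = y
    · have h1 : σ.cycleOf y = 1 := (Equiv.Perm.cycleOf_eq_one_iff σ).mpr hyfix
      have h2 : revAt σ x₀ y = y := by rw [revAt_apply, if_neg hy, hyfix]
      rw [h1, (Equiv.Perm.cycleOf_eq_one_iff _).mpr h2]
    · set d := σ.cycleOf y with hd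
      have hdfac : d ∈ σ.cycleFactorsFinset :=
        Equiv.Perm.cycleOf_mem_cycleFactorsFinset_iff.mpr (Equiv.Perm.mem_support.mpr hyfix)
      have hyd : y ∈ d.support :=
        Equiv.Perm.mem_support_cycleOf_iff.mpr ⟨Equiv.Perm.SameCycle.refl _ _,
          Equiv.Perm.mem_support.mpr hyfix⟩
      have hdc : d ≠ c := fun h => hy (h ▸ hyd)
      have hdisj : Equiv.Perm.Disjoint d c :=
        σ.cycleFactorsFinset_pairwise_disjoint hdfac hcfac hdc
      have hdfac' : d ∈ (revAt σ x₀).cycleFactorsFinset := by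
        rw [Equiv.Perm.mem_cycleFactorsFinset_iff]
        refine ⟨(Equiv.Perm.mem_cycleFactorsFinset_iff.mp hdfac).1, fun z hz => ?_⟩
        have hzc : z ∉ c.support :=
          Finset.disjoint_left.mp hdisj.disjoint_support hz
        rw [revAt_apply, if_neg hzc]
        exact (Equiv.Perm.mem_cycleFactorsFinset_iff.mp hdfac).2 z hz
      exact (Equiv.Perm.cycle_is_cycleOf hyd hdfac').symm

lemma card_cycleOf_revAt (σ : Perm α) (x₀ : α) (hx₀ : x₀ ∈ σ.support) (y : α) :
    ((revAt σ x₀).cycleOf y).support.card = (σ.cycleOf y).support.card := by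
  rw [cycleOf_revAt σ x₀ hx₀ y]
  by_cases hy : y ∈ (σ.cycleOf x₀).support
  · rw [if_pos hy, Equiv.Perm.support_inv]
    have : σ.cycleOf x₀ = σ.cycleOf y :=
      Equiv.Perm.SameCycle.cycleOf_eq (Equiv.Perm.mem_support_cycleOf_iff.mp hy).1
    rw [this]
  · rw [if_neg hy]

lemma mem_support_cycleOf_self (σ : Perm α) {x : α} (hx : x ∈ σ.support) :
    x ∈ (σ.cycleOf x).support :=
  Equiv.Perm.mem_support_cycleOf_iff.mpr ⟨Equiv.Perm.SameCycle.refl _ _, hx⟩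

lemma cycleOf_revAt_base (σ : Perm α) (x₀ : α) (hx₀ : x₀ ∈ σ.support) :
    (revAt σ x₀).cycleOf x₀ = (σ.cycleOf x₀)⁻¹ := by
  rw [cycleOf_revAt σ x₀ hx₀ x₀, if_pos (mem_support_cycleOf_self σ hx₀)]

lemma revAt_revAt (σ : Perm α) (x₀ : α) (hx₀ : x₀ ∈ σ.support) :
    revAt (revAt σ x₀) x₀ = σ := by
  rw [revAt, cycleOf_revAt_base σ x₀ hx₀, revAt]
  group

lemma revAt_ne (σ : Perm α) (x₀ : α) (hx₀ : x₀ ∈ σ.support)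
    (hodd : Odd (σ.cycleOf x₀).support.card) : revAt σ x₀ ≠ σ := by
  intro h
  set c := σ.cycleOf x₀ with hc
  have h1 : c⁻¹ * c⁻¹ = 1 := by
    have := h
    rw [revAt, mul_assoc, mul_eq_left] at this
    exact this
  have h3 : c * c = 1 := by
    have := congrArg (fun t => c * t * c) h1
    simpa [mul_assoc] using this.symm
  have h4 : orderOf c ∣ 2 := orderOf_dvd_of_pow_eq_one (by rw [pow_two]; exact h3)
  have hccyc : c.IsCycle := Equiv.Perm.isCycle_cycleOf σ (Equiv.Perm.mem_support.mp hx₀)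
  rw [← hccyc.orderOf] at hodd
  have h5 : orderOf c = 1 ∨ orderOf c = 2 := (Nat.dvd_prime Nat.prime_two).mp h4
  rcases h5 with h5 | h5
  · exact hccyc.ne_one (orderOf_eq_one_iff.mp h5)
  · rw [h5] at hodd; exact absurd (Nat.odd_iff.mp hodd) (by norm_num)

lemma sign_revAt (σ : Perm α) (x₀ : α) : Equiv.Perm.sign (revAt σ x₀) = Equiv.Perm.sign σ := by
  rw [revAt, _root_.map_mul, _root_.map_mul, map_inv]
  rcases Int.units_eq_one_or (Equiv.Perm.sign (σ.cycleOf x₀)) with h | h <;> rw [h] <;> simp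

end Perm

section Color
open Equiv Equiv.Perm Finset


lemma exists_coloring (σ : Perm (Fin n)) (hfpf : ∀ x, σ x ≠ x)
    (heven : ∀ x, Even ((σ.cycleOf x).support.card)) :
    ∃ f : Fin n → Bool, ∀ x, f (σ x) = ! f x := by
  classical
  have hne : ∀ y : Fin n, ((σ.cycleOf y).support).Nonempty := fun y =>
    ⟨y, Equiv.Perm.mem_support_cycleOf_iff.mpr ⟨Equiv.Perm.SameCycle.refl _ _,
      Equiv.Perm.mem_support.mpr (hfpf y)⟩⟩
  set b : Fin n → Fin n := fun y => ((σ.cycleOf y).support).min' (hne y) with hbdef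
  have hbmem : ∀ y, b y ∈ (σ.cycleOf y).support := fun y => Finset.min'_mem _ _
  have hbcyc : ∀ y, σ.SameCycle (b y) y := fun y =>
    ((Equiv.Perm.mem_support_cycleOf_iff.mp (hbmem y)).1).symm
  have hb : ∀ y, b (σ y) = b y := by
    intro y
    have h : σ.cycleOf (σ y) = σ.cycleOf y := Equiv.Perm.cycleOf_self_apply σ y
    simp only [hbdef]
    congr 1
    rw [h]
  have hex : ∀ y : Fin n, ∃ k : ℕ, (σ ^ k) (b y) = y := by
    intro y
    have h1 : σ.cycleOf y = σ.cycleOf (b y) :=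
      Equiv.Perm.SameCycle.cycleOf_eq (hbcyc y).symm
    have hc : (σ.cycleOf (b y)).IsCycle :=
      Equiv.Perm.isCycle_cycleOf σ (hfpf (b y))
    have hm1 : b y ∈ (σ.cycleOf (b y)).support := by rw [← h1]; exact hbmem y
    have hm2 : y ∈ (σ.cycleOf (b y)).support := by
      rw [← h1]
      exact Equiv.Perm.mem_support_cycleOf_iff.mpr ⟨Equiv.Perm.SameCycle.refl _ _,
        Equiv.Perm.mem_support.mpr (hfpf y)⟩
    have hsc : (σ.cycleOf (b y)).SameCycle (b y) y :=
      hc.sameCycle (Equiv.Perm.mem_support.mp hm1) (Equiv.Perm.mem_support.mp hm2)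
    obtain ⟨i, _, hi⟩ := hsc.exists_pow_eq'
    exact ⟨i, by rwa [Equiv.Perm.cycleOf_pow_apply_self] at hi⟩
  have hk : ∀ y, (σ ^ (Nat.find (hex y))) (b y) = y := fun y => Nat.find_spec (hex y)
  have hklt : ∀ y, Nat.find (hex y) < (σ.cycleOf y).support.card := by
    intro y
    have h1 : σ.cycleOf y = σ.cycleOf (b y) :=
      Equiv.Perm.SameCycle.cycleOf_eq (hbcyc y).symm
    have hc : (σ.cycleOf (b y)).IsCycle := Equiv.Perm.isCycle_cycleOf σ (hfpf (b y))
    have hm1 : b y ∈ (σ.cycleOf (b y)).support := by rw [← h1]; exact hbmem y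
    have hm2 : y ∈ (σ.cycleOf (b y)).support := by
      rw [← h1]
      exact Equiv.Perm.mem_support_cycleOf_iff.mpr ⟨Equiv.Perm.SameCycle.refl _ _,
        Equiv.Perm.mem_support.mpr (hfpf y)⟩
    have hsc : (σ.cycleOf (b y)).SameCycle (b y) y :=
      hc.sameCycle (Equiv.Perm.mem_support.mp hm1) (Equiv.Perm.mem_support.mp hm2)
    obtain ⟨i, hilt, hi⟩ := hsc.exists_pow_eq'
    rw [Equiv.Perm.cycleOf_pow_apply_self] at hi
    have hle : Nat.find (hex y) ≤ i := Nat.find_min' (hex y) hi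
    calc Nat.find (hex y) ≤ i := hle
      _ < orderOf (σ.cycleOf (b y)) := hilt
      _ = (σ.cycleOf (b y)).support.card := hc.orderOf
      _ = (σ.cycleOf y).support.card := by rw [h1]
  refine ⟨fun y => decide (Odd (Nat.find (hex y))), ?_⟩
  intro y
  show decide (Odd (Nat.find (hex (σ y)))) = ! decide (Odd (Nat.find (hex y)))
  have hpow : (σ ^ (Nat.find (hex y) + 1)) (b y) = σ y := by
    rw [pow_succ', Equiv.Perm.mul_apply, hk y]
  by_cases hby : σ y = b y
  · have h0 : Nat.find (hex (σ y)) = 0 := by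
      rw [Nat.find_eq_zero]
      simp only [pow_zero, Equiv.Perm.one_apply]
      rw [hb y]
      exact hby.symm
    have hm : (σ ^ (Nat.find (hex y) + 1)) (b y) = b y := by rw [hpow]; exact hby
    set c : Perm (Fin n) := σ.cycleOf (b y) with hcdef
    have h1 : σ.cycleOf y = c := Equiv.Perm.SameCycle.cycleOf_eq (hbcyc y).symm
    have hc : c.IsCycle := Equiv.Perm.isCycle_cycleOf σ (hfpf (b y))
    have hbc : c (b y) ≠ b y := by
      rw [hcdef, Equiv.Perm.cycleOf_apply_self]
      exact hfpf (b y)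
    have hcpow : (c ^ (Nat.find (hex y) + 1)) (b y) = b y := by
      rw [Equiv.Perm.cycleOf_pow_apply_self]
      exact hm
    have hdvd : orderOf c ∣ Nat.find (hex y) + 1 :=
      orderOf_dvd_of_pow_eq_one ((hc.pow_eq_one_iff' hbc).mpr hcpow)
    have hcard : orderOf c = (σ.cycleOf y).support.card := by rw [hc.orderOf, h1]
    have hle : Nat.find (hex y) + 1 ≤ (σ.cycleOf y).support.card := hklt y
    have heq : Nat.find (hex y) + 1 = (σ.cycleOf y).support.card := by
      have h2 := Nat.le_of_dvd (Nat.succ_pos _) hdvd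
      rw [hcard] at h2
      omega
    have hodd : Odd (Nat.find (hex y)) := by
      have he := heven y
      rw [← heq] at he
      rwa [Nat.even_add_one, Nat.not_even_iff_odd] at he
    rw [h0]
    simp [hodd]
  · have hsucc : Nat.find (hex (σ y)) = Nat.find (hex y) + 1 := by
      rw [Nat.find_eq_iff]
      constructor
      · rw [hb y]
        exact hpow
      · intro j hj hjy
        rw [hb y] at hjy
        rcases Nat.eq_zero_or_pos j with rfl | hjpos
        · simp only [pow_zero, Equiv.Perm.one_apply] at hjy
          exact hby hjy.symm
        · obtain ⟨t, rfl⟩ := Nat.exists_eq_succ_of_ne_zero (Nat.pos_iff_ne_zero.mp hjpos)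
          rw [pow_succ', Equiv.Perm.mul_apply] at hjy
          have ht : (σ ^ t) (b y) = y := σ.injective hjy
          have ht2 : t < Nat.find (hex y) := by omega
          exact Nat.find_min (hex y) ht2 ht
    rw [hsucc]
    by_cases hodd : Odd (Nat.find (hex y))
    · have h2 : ¬ Odd (Nat.find (hex y) + 1) := by
        rw [Nat.odd_add_one]
        simp [hodd]
      simp [hodd, h2]
    · have h2 : Odd (Nat.find (hex y) + 1) := by
        rw [Nat.odd_add_one]
        exact hodd
      simp [hodd, h2]

lemma matching_of_coloring (G : SimpleGraph (Fin n)) (σ : Equiv.Perm (Fin n))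
    (f : Fin n → Bool) (hf : ∀ x, f (σ x) = ! f x) (hadj : ∀ x, G.Adj (σ x) x) :
    ∃ M : G.Subgraph, M.IsPerfectMatching := by
  refine ⟨{ verts := Set.univ,
            Adj := fun a c => (f a = true ∧ c = σ a) ∨ (f c = true ∧ a = σ c),
            adj_sub := ?_,
            edge_vert := fun _ => Set.mem_univ _,
            symm := ⟨fun a c h => h.symm.imp id id⟩ }, ?_, fun v => Set.mem_univ v⟩
  · rintro v w (⟨-, rfl⟩ | ⟨-, rfl⟩)
    · exact (hadj v).symm
    · exact hadj w
  · rintro v -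
    by_cases hv : f v = true
    · refine ⟨σ v, Or.inl ⟨hv, rfl⟩, ?_⟩
      rintro w (⟨-, rfl⟩ | ⟨hw, rfl⟩)
      · rfl
      · rw [hf w, hw] at hv
        simp at hv
    · refine ⟨σ⁻¹ v, Or.inr ⟨?_, (Equiv.apply_symm_apply σ v).symm⟩, ?_⟩
      · have := hf (σ⁻¹ v)
        rw [show σ (σ⁻¹ v) = v from Equiv.apply_symm_apply σ v] at this
        cases hfv : f (σ⁻¹ v)
        · rw [hfv] at this
          simp at this
          exact absurd this hv
        · rfl
      · rintro w (⟨hw, rfl⟩ | ⟨-, rfl⟩)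
        · exact absurd hw hv
        · rw [Equiv.Perm.inv_def, Equiv.symm_apply_apply]

end Color


lemma elemAlt_apply (i j a b : Fin n) : elemAlt n F i j a b =
    (if i = a ∧ j = b then (1:F) else 0) - (if j = a ∧ i = b then (1:F) else 0) := by
  simp [elemAlt, Matrix.single]

lemma forward_dir (M : G.Subgraph) (hM : M.IsPerfectMatching) :
    ∃ A ∈ graphSpace n F G, IsUnit A := by
  classical
  have hex : ∀ x : Fin n, ∃! w, M.Adj x w := fun x => hM.1 (hM.2 x)
  set m : Fin n → Fin n := fun x => (hex x).exists.choose with hm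
  have hadj : ∀ x, M.Adj x (m x) := fun x => (hex x).exists.choose_spec
  have hmm : ∀ x, m (m x) = x := by
    intro x
    exact ((hex (m x)).unique (hadj (m x)) (hadj x).symm)
  have hGadj : ∀ x, G.Adj x (m x) := fun x => M.adj_sub (hadj x)
  have hne : ∀ x, x ≠ m x := fun x => (hGadj x).ne
  set A : Matrix (Fin n) (Fin n) F :=
    ∑ x : Fin n, if x < m x then elemAlt n F x (m x) else 0 with hA
  refine ⟨A, ?_, ?_⟩
  · apply Submodule.sum_mem
    intro x _
    by_cases h : x < m x
    · rw [if_pos h]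
      exact Submodule.subset_span ⟨x, m x, hGadj x, rfl⟩
    · rw [if_neg h]; exact Submodule.zero_mem _
  · have hAe : ∀ i j : Fin n, A i j =
        if j = m i then (if i < j then (1:F) else -1) else 0 := by
      intro i j
      rw [hA, Matrix.sum_apply]
      by_cases hj : j = m i
      · subst hj
        by_cases hlt : i < m i
        · rw [if_pos rfl, if_pos hlt]
          rw [Finset.sum_eq_single i]
          · rw [if_pos hlt, elemAlt_apply, if_pos ⟨rfl, rfl⟩, if_neg, sub_zero]
            rintro ⟨h1, -⟩
            exact hne i h1.symm
          · intro b _ hb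
            by_cases hbl : b < m b
            · rw [if_pos hbl, elemAlt_apply, if_neg, if_neg, sub_zero]
              · rintro ⟨h1, rfl⟩
                rw [hmm] at hbl
                exact absurd hlt (asymm hbl)
              · rintro ⟨rfl, -⟩
                exact hb rfl
            · rw [if_neg hbl]; simp
          · simp
        · have hlt' : m i < i := lt_of_le_of_ne (not_lt.mp hlt) (Ne.symm (hne i))
          rw [if_pos rfl, if_neg hlt]
          rw [Finset.sum_eq_single (m i)]
          · have hmb : m i < m (m i) := by rw [hmm]; exact hlt'
            rw [if_pos hmb, elemAlt_apply, if_neg, if_pos ⟨(hmm i), rfl⟩, zero_sub]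
            rintro ⟨h1, -⟩
            exact hne i h1.symm
          · intro b _ hb
            by_cases hbl : b < m b
            · rw [if_pos hbl, elemAlt_apply, if_neg, if_neg, sub_zero]
              · rintro ⟨-, rfl⟩
                exact hb rfl
              · rintro ⟨rfl, -⟩
                exact hlt hbl
            · rw [if_neg hbl]; simp
          · simp
      · rw [if_neg hj]
        apply Finset.sum_eq_zero
        intro b _
        by_cases hbl : b < m b
        · rw [if_pos hbl, elemAlt_apply, if_neg, if_neg, sub_zero]
          · rintro ⟨h1, rfl⟩
            exact hj (by rw [← h1, hmm])
          · rintro ⟨rfl, rfl⟩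
            exact hj rfl
        · rw [if_neg hbl]; simp
    rw [Matrix.isUnit_iff_isUnit_det]
    apply Matrix.isUnit_det_of_right_inverse (B := -A)
    ext i k
    rw [Matrix.mul_apply]
    simp only [Matrix.neg_apply]
    rw [Finset.sum_eq_single (m i)]
    · by_cases hik : k = i
      · rw [hik, Matrix.one_apply_eq, hAe i (m i), hAe (m i) i, if_pos rfl,
          if_pos (hmm i).symm]
        rcases lt_or_gt_of_ne (hne i) with h | h
        · rw [if_pos h, if_neg (asymm h)]; ring
        · rw [if_neg (asymm h), if_pos h]; ring
      · rw [hAe (m i) k, if_neg (fun h : k = m (m i) => hik (by rwa [hmm] at h)),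
          Matrix.one_apply_ne (fun h : i = k => hik h.symm)]
        ring
    · intro b _ hb
      rw [hAe i b, if_neg hb]
      ring
    · simp


section Main
open Equiv Equiv.Perm Finset

lemma min'_congr' {β : Type*} [LinearOrder β] {s t : Finset β} (h : s = t)
    (hs : s.Nonempty) (ht : t.Nonempty) : s.min' hs = t.min' ht := by subst h; rfl

lemma prod_revAt_eq_neg {n : ℕ} {F : Type} [Field F] {G : SimpleGraph (Fin n)}
    {A : Matrix (Fin n) (Fin n) F} (hA : A ∈ graphSpace n F G)
    (σ : Equiv.Perm (Fin n)) (x₀ : Fin n) (hx₀ : x₀ ∈ σ.support)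
    (hodd : Odd (σ.cycleOf x₀).support.card) :
    ∏ x, A ((revAt σ x₀) x) x = - ∏ x, A (σ x) x := by
  classical
  set c := σ.cycleOf x₀ with hc
  set S := c.support with hS
  have hsplit1 := Finset.prod_mul_prod_compl S (fun x => A ((revAt σ x₀) x) x)
  have hsplit2 := Finset.prod_mul_prod_compl S (fun x => A (σ x) x)
  have h2 : ∏ x ∈ Sᶜ, A ((revAt σ x₀) x) x = ∏ x ∈ Sᶜ, A (σ x) x := by
    refine Finset.prod_congr rfl fun x hx => ?_
    rw [revAt_apply, if_neg (Finset.mem_compl.mp hx)]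
  have hstepb : ∏ x ∈ S, A (c⁻¹ x) x = ∏ x ∈ S, A x (c x) := by
    refine Finset.prod_nbij' (fun x => c⁻¹ x) (fun x => c x) ?_ ?_ ?_ ?_ ?_
    · intro a ha
      rw [hS, ← Equiv.Perm.support_inv]
      exact Equiv.Perm.apply_mem_support.mpr (by rwa [Equiv.Perm.support_inv, ← hS])
    · intro a ha
      rw [hS]
      exact Equiv.Perm.apply_mem_support.mpr (by rwa [← hS])
    · intro a _; exact Equiv.apply_symm_apply c a
    · intro a _; exact Equiv.symm_apply_apply c a
    · intro a _
      rw [Equiv.Perm.inv_def, Equiv.apply_symm_apply]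
  have h1 : ∏ x ∈ S, A ((revAt σ x₀) x) x = - ∏ x ∈ S, A (σ x) x := by
    have ha : ∏ x ∈ S, A ((revAt σ x₀) x) x = ∏ x ∈ S, A (c⁻¹ x) x :=
      Finset.prod_congr rfl fun x hx => by rw [revAt_apply, if_pos hx]
    have hcx : ∀ x ∈ S, c x = σ x := by
      intro x hx
      rw [hc, Equiv.Perm.cycleOf_apply,
        if_pos (Equiv.Perm.mem_support_cycleOf_iff.mp (hS ▸ hx)).1]
    have hcskew : ∏ x ∈ S, A x (c x) = ∏ x ∈ S, -(A (σ x) x) :=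
      Finset.prod_congr rfl fun x hx => by rw [hcx x hx, graphSpace_skew hA (σ x) x]
    have hneg : ∏ x ∈ S, -(A (σ x) x) = (-1 : F) ^ S.card * ∏ x ∈ S, A (σ x) x := by
      rw [← Finset.prod_const, ← Finset.prod_mul_distrib]
      exact Finset.prod_congr rfl fun x _ => by ring
    rw [ha, hstepb, hcskew, hneg, Odd.neg_one_pow hodd]
    ring
  calc ∏ x, A ((revAt σ x₀) x) x
      = (∏ x ∈ S, A ((revAt σ x₀) x) x) * ∏ x ∈ Sᶜ, A ((revAt σ x₀) x) x := hsplit1.symm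
    _ = (- ∏ x ∈ S, A (σ x) x) * ∏ x ∈ Sᶜ, A (σ x) x := by rw [h1, h2]
    _ = - ((∏ x ∈ S, A (σ x) x) * ∏ x ∈ Sᶜ, A (σ x) x) := by ring
    _ = - ∏ x, A (σ x) x := by rw [hsplit2]

lemma oddF_nonempty {n : ℕ} (σ : Equiv.Perm (Fin n))
    (h : ¬ ∀ x, Even ((σ.cycleOf x).support.card)) :
    (Finset.univ.filter fun x => Odd ((σ.cycleOf x).support.card)).Nonempty := by
  push_neg at h
  obtain ⟨x, hx⟩ := h
  exact ⟨x, Finset.mem_filter.mpr ⟨Finset.mem_univ x, Nat.not_even_iff_odd.mp hx⟩⟩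

/-- The least point lying on an odd cycle. -/
def oddMin {n : ℕ} (σ : Equiv.Perm (Fin n))
    (h : ¬ ∀ x, Even ((σ.cycleOf x).support.card)) : Fin n :=
  (Finset.univ.filter fun x => Odd ((σ.cycleOf x).support.card)).min' (oddF_nonempty σ h)

lemma oddMin_odd {n : ℕ} (σ : Equiv.Perm (Fin n))
    (h : ¬ ∀ x, Even ((σ.cycleOf x).support.card)) :
    Odd ((σ.cycleOf (oddMin σ h)).support.card) := by
  have hm := Finset.min'_mem (Finset.univ.filter fun x =>
    Odd ((σ.cycleOf x).support.card)) (oddF_nonempty σ h)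
  exact (Finset.mem_filter.mp hm).2

lemma oddMin_supp {n : ℕ} (σ : Equiv.Perm (Fin n))
    (h : ¬ ∀ x, Even ((σ.cycleOf x).support.card)) : oddMin σ h ∈ σ.support := by
  by_contra hs
  have hodd := oddMin_odd σ h
  rw [Equiv.Perm.notMem_support] at hs
  rw [(Equiv.Perm.cycleOf_eq_one_iff σ).mpr hs] at hodd
  simp at hodd

lemma oddF_revAt {n : ℕ} (σ : Equiv.Perm (Fin n)) (x₀ : Fin n) (hx₀ : x₀ ∈ σ.support) :
    (Finset.univ.filter fun x => Odd (((revAt σ x₀).cycleOf x).support.card))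
      = Finset.univ.filter fun x => Odd ((σ.cycleOf x).support.card) := by
  ext y
  simp [Finset.mem_filter, card_cycleOf_revAt σ x₀ hx₀ y]

lemma revAt_bad {n : ℕ} (σ : Equiv.Perm (Fin n))
    (h : ¬ ∀ x, Even ((σ.cycleOf x).support.card)) :
    ¬ ∀ x, Even (((revAt σ (oddMin σ h)).cycleOf x).support.card) := by
  intro hall
  have h1 := hall (oddMin σ h)
  rw [card_cycleOf_revAt σ _ (oddMin_supp σ h)] at h1
  rw [← Nat.not_odd_iff_even] at h1
  exact h1 (oddMin_odd σ h)

lemma oddMin_revAt {n : ℕ} (σ : Equiv.Perm (Fin n))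
    (h : ¬ ∀ x, Even ((σ.cycleOf x).support.card))
    (h' : ¬ ∀ x, Even (((revAt σ (oddMin σ h)).cycleOf x).support.card)) :
    oddMin (revAt σ (oddMin σ h)) h' = oddMin σ h :=
  min'_congr' (oddF_revAt σ (oddMin σ h) (oddMin_supp σ h)) _ _

lemma bad_sum_zero {n : ℕ} {F : Type} [Field F] {G : SimpleGraph (Fin n)}
    {A : Matrix (Fin n) (Fin n) F} (hA : A ∈ graphSpace n F G) :
    ∑ σ ∈ Finset.univ.filter
      (fun σ : Equiv.Perm (Fin n) => ¬ ∀ x, Even ((σ.cycleOf x).support.card)),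
      (((Equiv.Perm.sign σ : ℤ) : F) * ∏ x, A (σ x) x) = 0 := by
  classical
  refine Finset.sum_involution
    (fun σ hσ => revAt σ (oddMin σ (Finset.mem_filter.mp hσ).2)) ?_ ?_ ?_ ?_
  · intro σ hσ
    have hsign : ((Equiv.Perm.sign (revAt σ (oddMin σ (Finset.mem_filter.mp hσ).2)) : ℤ) : F)
        = ((Equiv.Perm.sign σ : ℤ) : F) := by rw [sign_revAt]
    rw [hsign, prod_revAt_eq_neg hA σ _ (oddMin_supp σ (Finset.mem_filter.mp hσ).2)
      (oddMin_odd σ (Finset.mem_filter.mp hσ).2)]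
    ring
  · intro σ hσ _
    exact revAt_ne σ _ (oddMin_supp σ (Finset.mem_filter.mp hσ).2)
      (oddMin_odd σ (Finset.mem_filter.mp hσ).2)
  · intro σ hσ
    exact Finset.mem_filter.mpr ⟨Finset.mem_univ _,
      revAt_bad σ (Finset.mem_filter.mp hσ).2⟩
  · intro σ hσ
    beta_reduce
    rw [oddMin_revAt σ (Finset.mem_filter.mp hσ).2]
    exact revAt_revAt σ _ (oddMin_supp σ (Finset.mem_filter.mp hσ).2)

lemma backward_dir {n : ℕ} {F : Type} [Field F] {G : SimpleGraph (Fin n)}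
    {A : Matrix (Fin n) (Fin n) F} (hA : A ∈ graphSpace n F G) (hU : IsUnit A) :
    ∃ M : G.Subgraph, M.IsPerfectMatching := by
  classical
  have hdet : A.det ≠ 0 := by
    rw [Matrix.isUnit_iff_isUnit_det] at hU
    exact hU.ne_zero
  rw [Matrix.det_apply'] at hdet
  have hsum := Finset.sum_filter_add_sum_filter_not Finset.univ
    (fun σ : Equiv.Perm (Fin n) => ∀ x, Even ((σ.cycleOf x).support.card))
    (fun σ => ((Equiv.Perm.sign σ : ℤ) : F) * ∏ x, A (σ x) x)
  have hgoodsum : ∑ σ ∈ Finset.univ.filter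
      (fun σ : Equiv.Perm (Fin n) => ∀ x, Even ((σ.cycleOf x).support.card)),
      (((Equiv.Perm.sign σ : ℤ) : F) * ∏ x, A (σ x) x) ≠ 0 := by
    intro h0
    apply hdet
    rw [← hsum, h0, bad_sum_zero hA, add_zero]
  obtain ⟨σ, hσmem, hσne⟩ := Finset.exists_ne_zero_of_sum_ne_zero hgoodsum
  have heven : ∀ x, Even ((σ.cycleOf x).support.card) := (Finset.mem_filter.mp hσmem).2
  have hprod : ∏ x, A (σ x) x ≠ 0 := by
    intro h0
    apply hσne
    rw [h0, mul_zero]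
  have hAx : ∀ x, A (σ x) x ≠ 0 := fun x =>
    Finset.prod_ne_zero_iff.mp hprod x (Finset.mem_univ x)
  have hGadj : ∀ x, G.Adj (σ x) x := by
    intro x
    by_contra hc
    exact hAx x (graphSpace_apply_eq_zero hA hc)
  have hfpf : ∀ x, σ x ≠ x := fun x => (hGadj x).ne
  obtain ⟨f, hf⟩ := exists_coloring σ hfpf heven
  exact matching_of_coloring G σ f hf hGadj

end Main

/-- Tutte–Lovász: `G` has a perfect matching iff `𝒜_G` contains a full-rank matrix. -/
theorem perfect_matching_iff_full_rank (n : ℕ) (F : Type) [Field F]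
    (G : SimpleGraph (Fin n)) :
    (∃ M : G.Subgraph, M.IsPerfectMatching) ↔
      ∃ A ∈ graphSpace n F G, IsUnit A := by
  constructor
  · rintro ⟨M, hM⟩
    exact forward_dir M hM
  · rintro ⟨A, hA, hU⟩
    exact backward_dir hA hU
end
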